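/- Let Σ be a simplicial tropical fan of pure dimension d in ℝ^n and f a conewise integral linear function on Σ with ord_τ(f) ∈ {0,1} for every τ ∈ Σ_{d−1} and ord_τ(f) = 1 for at least one τ. Then Σ̃ := TM_f(Σ) is a simplicial rational fan in ℝ^{n+1} whose rays are the rays Γ(ρ), ρ ∈ Σ₁, with primitive generators (e_ρ, f(e_ρ)), together with the special ray ℝ_{≥0}·e with primitive generator e. The ring homomorphism ℤ[x_ρ : ρ ∈ Σ₁] → ℤ[x_r : r a ray of Σ̃] defined by x_ρ ↦ x_{Γ(ρ)} descends to a well-defined surjective homomorphism of graded rings A•(Σ) → A•(Σ̃). -/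

import Mathlib

/- Formalization of polyhedral-geometry notions: rational fans in ℝⁿ with lattice ℤⁿ,
tropical fans (balancing condition), conewise integral linear functions, Minkowski
weights, etc., following the paper "Homology of tropical fans" by Amini–Piquerez. -/

open Classical MvPolynomial
open scoped TensorProduct DirectSum

noncomputable section

/-- The ambient space `ℝ^n`. -/
abbrev V (n : ℕ) : Type := Fin n → ℝ

/-- The inclusion of the lattice `ℤ^n` into `ℝ^n`. -/
def intVec {n : ℕ} (v : Fin n → ℤ) : V n := fun i => (v i : ℝ)

lemma intVec_zero {n : ℕ} : intVec (0 : Fin n → ℤ) = 0 := by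
  funext i; simp [intVec]

lemma intVec_add {n : ℕ} (a b : Fin n → ℤ) : intVec (a + b) = intVec a + intVec b := by
  funext i; simp [intVec]

lemma intVec_neg {n : ℕ} (a : Fin n → ℤ) : intVec (-a) = -intVec a := by
  funext i; simp [intVec]

/-- The pairing between `M = Hom(ℤ^n, ℤ)` (an element of which is represented by its
coefficient vector) and the lattice `ℤ^n`. -/
def pairZ {n : ℕ} (ℓ v : Fin n → ℤ) : ℤ := ∑ i, ℓ i * v i

/-- The pairing between an element of `M` and a vector of `ℝ^n`, i.e. the linear form
on `ℝ^n` defined by an element of `M`. -/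
def pairR {n : ℕ} (ℓ : Fin n → ℤ) (x : V n) : ℝ := ∑ i, (ℓ i : ℝ) * x i

/-- `σ` is a rational cone: the set of nonnegative combinations of a finite set of
integer vectors. -/
def IsRationalCone {n : ℕ} (σ : Set (V n)) : Prop :=
  ∃ S : Finset (Fin n → ℤ),
    σ = {x | ∃ lam : (Fin n → ℤ) → ℝ, (∀ v, 0 ≤ lam v) ∧ x = ∑ v ∈ S, lam v • intVec v}

/-- A cone is strongly convex if `σ ∩ (-σ) = {0}`. -/
def StronglyConvex {n : ℕ} (σ : Set (V n)) : Prop := σ ∩ (-σ) = {0}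

/-- `τ` is a face of the cone `σ`: `τ = σ ∩ ker ℓ` for a linear form `ℓ` nonnegative
on `σ`. -/
def IsFaceOf {n : ℕ} (τ σ : Set (V n)) : Prop :=
  ∃ ℓ : (V n) →ₗ[ℝ] ℝ, (∀ x ∈ σ, 0 ≤ ℓ x) ∧ τ = σ ∩ {x | ℓ x = 0}

/-- A (rational) fan in `ℝ^n`: a finite nonempty collection of strongly convex rational
cones, closed under taking faces, such that the intersection of any two cones is a face
of each of them. -/
structure IsFan {n : ℕ} (F : Finset (Set (V n))) : Prop where
  nonempty : F.Nonempty
  rat : ∀ σ ∈ F, IsRationalCone σ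
  convex : ∀ σ ∈ F, StronglyConvex σ
  faces_mem : ∀ σ ∈ F, ∀ τ : Set (V n), IsFaceOf τ σ → τ ∈ F
  inter_face_left : ∀ σ ∈ F, ∀ σ' ∈ F, IsFaceOf (σ ∩ σ') σ
  inter_face_right : ∀ σ ∈ F, ∀ σ' ∈ F, IsFaceOf (σ ∩ σ') σ'

/-- The dimension of a cone: the dimension of its real linear span. -/
def dimC {n : ℕ} (σ : Set (V n)) : ℕ := Module.finrank ℝ ↥(Submodule.span ℝ σ)

/-- `v ∈ N_σ := ℤ^n ∩ span_ℝ(σ)`. -/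
def memLat {n : ℕ} (σ : Set (V n)) (v : Fin n → ℤ) : Prop :=
  intVec v ∈ Submodule.span ℝ σ

/-- `v` is a normal vector `n_{σ/τ}` for the codimension-one face `τ` of `σ`:
`v ∈ N_σ ∩ (σ + span_ℝ(τ))` and `N_τ + ℤ·v = N_σ`. -/
def IsNormalVector {n : ℕ} (σ τ : Set (V n)) (v : Fin n → ℤ) : Prop :=
  memLat σ v ∧ (∃ y ∈ σ, ∃ z ∈ Submodule.span ℝ τ, intVec v = y + z) ∧
  ∀ w : Fin n → ℤ, memLat σ w ↔ ∃ u : Fin n → ℤ, ∃ k : ℤ, memLat τ u ∧ w = u + k • v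

/-- The cones of `F` of dimension `d` containing `τ`. -/
def facets {n : ℕ} (F : Finset (Set (V n))) (d : ℕ) (τ : Set (V n)) :
    Finset (Set (V n)) :=
  F.filter fun σ => dimC σ = d ∧ τ ⊆ σ

/-- `Σ_k`: the `k`-dimensional cones of the fan. -/
def conesK {n : ℕ} (F : Finset (Set (V n))) (k : ℕ) : Finset (Set (V n)) :=
  F.filter fun σ => dimC σ = k

/-- A tropical fan of pure dimension `d`: a rational fan, pure of dimension `d`
(every maximal cone has dimension `d`), satisfying the balancing condition: for every
`τ ∈ Σ_{d-1}` and any choice of normal vectors, `∑_{σ ⊃ τ} n_{σ/τ} ∈ N_τ`. -/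
def IsTropicalFan {n : ℕ} (F : Finset (Set (V n))) (d : ℕ) : Prop :=
  IsFan F ∧ (∀ σ ∈ F, (∀ η ∈ F, σ ⊆ η → σ = η) → dimC σ = d) ∧
  ∀ τ ∈ F, dimC τ = d - 1 →
    ∀ v : Set (V n) → Fin n → ℤ,
      (∀ σ ∈ facets F d τ, IsNormalVector σ τ (v σ)) →
      memLat τ (∑ σ ∈ facets F d τ, v σ)

/-- `f` is conewise integral linear on the fan `F`: on each cone it agrees with an
element of `M`. -/
def ConewiseLinear {n : ℕ} (F : Finset (Set (V n))) (f : V n → ℝ) : Prop :=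
  ∀ σ ∈ F, ∃ ℓ : Fin n → ℤ, ∀ x ∈ σ, f x = pairR ℓ x

/-- A Minkowski weight of dimension `k` on the fan `F`: an integer weight on `Σ_k`
satisfying the balancing condition. -/
def IsMinkowskiWeight {n : ℕ} (F : Finset (Set (V n))) (k : ℕ) (w : Set (V n) → ℤ) :
    Prop :=
  ∀ τ ∈ F, dimC τ = k - 1 →
    ∀ u : Set (V n) → Fin n → ℤ,
      (∀ σ ∈ facets F k τ, IsNormalVector σ τ (u σ)) →
      memLat τ (∑ σ ∈ facets F k τ, w σ • u σ)

/-- The rays (one-dimensional cones) of the fan. -/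
def raysF {n : ℕ} (F : Finset (Set (V n))) : Finset (Set (V n)) :=
  F.filter fun ρ => dimC ρ = 1

/-- The type of rays of the fan `F`. -/
abbrev RayT {n : ℕ} (F : Finset (Set (V n))) : Type := {ρ : Set (V n) // ρ ∈ raysF F}

/-- The rays of the cone `σ` in the fan `F`. -/
def raysOfCone {n : ℕ} (F : Finset (Set (V n))) (σ : Set (V n)) :
    Finset (Set (V n)) :=
  (raysF F).filter fun ρ => ρ ⊆ σ

/-- The fan `F` is simplicial: every cone has exactly `dim σ` rays and is generated by
them (every element of `σ` is a sum of elements of the rays of `σ`). -/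
def IsSimplicial {n : ℕ} (F : Finset (Set (V n))) : Prop :=
  ∀ σ ∈ F, (raysOfCone F σ).card = dimC σ ∧
    σ = {x | ∃ y : Set (V n) → V n, (∀ ρ ∈ raysOfCone F σ, y ρ ∈ ρ) ∧
             x = ∑ ρ ∈ raysOfCone F σ, y ρ}

/-- `v = e_ρ` is the primitive generator of the ray `ρ`: the generator of the rank-one
lattice `N_ρ` lying in `ρ`. -/
def IsPrimitiveGen {n : ℕ} (ρ : Set (V n)) (v : Fin n → ℤ) : Prop :=
  v ≠ 0 ∧ intVec v ∈ ρ ∧ ∀ w : Fin n → ℤ, memLat ρ w → ∃ k : ℤ, w = k • v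

/-- The fan `F` with primitive ray generators `e` is unimodular: simplicial, and for
every cone `σ`, the vectors `e_ρ`, `ρ` a ray of `σ`, form a `ℤ`-basis of `N_σ`. -/
def IsUnimodular {n : ℕ} (F : Finset (Set (V n))) (e : Set (V n) → Fin n → ℤ) : Prop :=
  IsSimplicial F ∧
  ∀ σ ∈ F, ∀ w : Fin n → ℤ, memLat σ w →
    ∃! c : Set (V n) → ℤ, (∀ ρ, ρ ∉ raysOfCone F σ → c ρ = 0) ∧
      w = ∑ ρ ∈ raysOfCone F σ, c ρ • e ρ

/-- The monomial `x_σ = ∏_{ρ ray of σ} x_ρ` in the polynomial ring on the rays. -/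
def xCone {n : ℕ} (F : Finset (Set (V n))) (σ : Set (V n)) :
    MvPolynomial (RayT F) ℤ :=
  ∏ ρ ∈ Finset.univ.filter (fun ρ : RayT F => ρ.1 ⊆ σ), X ρ

/-- The finite set `S` of rays forms the set of rays of a cone of `F`. -/
def FormsCone {n : ℕ} (F : Finset (Set (V n))) (S : Finset (RayT F)) : Prop :=
  ∃ σ ∈ F, ∀ ρ : RayT F, ρ ∈ S ↔ ρ.1 ⊆ σ

/-- The ideal `I` generated by the monomials `x_{ρ₁} ⋯ x_{ρ_k}` over subsets of
distinct rays not forming the set of rays of a cone of `F`. -/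
def idealI {n : ℕ} (F : Finset (Set (V n))) : Ideal (MvPolynomial (RayT F) ℤ) :=
  Ideal.span {p | ∃ S : Finset (RayT F), ¬ FormsCone F S ∧ p = ∏ ρ ∈ S, X ρ}

/-- The linear polynomial `x_ℓ = ∑_ρ ℓ(e_ρ) x_ρ` associated with `ℓ ∈ M`. -/
def xLin {n : ℕ} (F : Finset (Set (V n))) (e : Set (V n) → Fin n → ℤ)
    (ℓ : Fin n → ℤ) : MvPolynomial (RayT F) ℤ :=
  ∑ ρ : RayT F, C (pairZ ℓ (e ρ.1)) * X ρ

/-- The ideal `J` generated by the linear polynomials `∑_ρ ℓ(e_ρ) x_ρ`, `ℓ ∈ M`. -/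
def idealJ {n : ℕ} (F : Finset (Set (V n))) (e : Set (V n) → Fin n → ℤ) :
    Ideal (MvPolynomial (RayT F) ℤ) :=
  Ideal.span {p | ∃ ℓ : Fin n → ℤ, p = xLin F e ℓ}

/-- The defining ideal `I + J` of the Chow ring. -/
def chowIdeal {n : ℕ} (F : Finset (Set (V n))) (e : Set (V n) → Fin n → ℤ) :
    Ideal (MvPolynomial (RayT F) ℤ) := idealI F + idealJ F e

/-- The Chow ring `A•(Σ) = ℤ[x_ρ : ρ ∈ Σ₁]/(I + J)`. -/
abbrev ChowRing {n : ℕ} (F : Finset (Set (V n))) (e : Set (V n) → Fin n → ℤ) : Type :=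
  MvPolynomial (RayT F) ℤ ⧸ chowIdeal F e

/-- The subgroup `Z^k(Σ) = ⊕_{σ ∈ Σ_k} ℤ·x_σ` of the polynomial ring. -/
def Zgroup {n : ℕ} (F : Finset (Set (V n))) (k : ℕ) :
    AddSubgroup (MvPolynomial (RayT F) ℤ) :=
  AddSubgroup.closure {p | ∃ σ ∈ conesK F k, p = xCone F σ}

/-- The degree-`k` graded piece `A^k(Σ)` of the Chow ring: the image of the homogeneous
polynomials of degree `k` in the quotient. -/
def Apiece {n : ℕ} (F : Finset (Set (V n))) (e : Set (V n) → Fin n → ℤ) (k : ℕ) :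
    AddSubgroup (ChowRing F e) :=
  AddSubgroup.closure
    {y | ∃ P : MvPolynomial (RayT F) ℤ, P.IsHomogeneous k ∧
         y = Ideal.Quotient.mk (chowIdeal F e) P}

/-- `m` is the order of vanishing `ord_τ(f)` of `f` along the codimension-one cone `τ`,
computed with some (equivalently, by well-definedness, any) choice of normal vectors
`v` and of representatives `L σ ∈ M` of `f` on the cones `σ`. -/
def IsOrderAt {n : ℕ} (F : Finset (Set (V n))) (d : ℕ) (f : V n → ℝ)
    (τ : Set (V n)) (m : ℤ) : Prop :=
  ∃ v L : Set (V n) → Fin n → ℤ,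
    (∀ σ ∈ facets F d τ, IsNormalVector σ τ (v σ)) ∧
    (∀ σ ∈ F, ∀ x ∈ σ, f x = pairR (L σ) x) ∧
    m = -(∑ σ ∈ facets F d τ, pairZ (L σ) (v σ))
        + pairZ (L τ) (∑ σ ∈ facets F d τ, v σ)

/-- The graph embedding `x ↦ (x, f(x))` of `ℝ^n` in `ℝ^{n+1}`. -/
def graphMap {n : ℕ} (f : V n → ℝ) (x : V n) : V (n + 1) := Fin.snoc x (f x)

/-- The vector `e = (0, …, 0, 1) ∈ ℝ^{n+1}`. -/
def eVecR (n : ℕ) : V (n + 1) := Fin.snoc (0 : V n) 1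

/-- The cone `Γ(δ) + ℝ₊·e` of the tropical modification lying above `δ`. -/
def upCone {n : ℕ} (f : V n → ℝ) (δ : Set (V n)) : Set (V (n + 1)) :=
  {y | ∃ x ∈ δ, ∃ t : ℝ, 0 ≤ t ∧ y = graphMap f x + t • eVecR n}

/-- With `o` an order-of-vanishing function, the divisor `Δ` of `f`: the collection of
all faces of those codimension-one cones `τ` with `ord_τ(f) = 1`. -/
def divFaces {n : ℕ} (F : Finset (Set (V n))) (d : ℕ) (o : Set (V n) → ℤ) :
    Finset (Set (V n)) :=
  F.filter fun δ => ∃ τ ∈ F, dimC τ = d - 1 ∧ o τ = 1 ∧ IsFaceOf δ τ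

/-- The (open) tropical modification `TM_f(Σ)`: the cones `Γ(σ) = {(x, f(x)) : x ∈ σ}`
for `σ ∈ Σ` together with the cones `Γ(δ) + ℝ₊·e` for `δ ∈ Δ`. -/
def TMfan {n : ℕ} (F : Finset (Set (V n))) (f : V n → ℝ) (Δ : Finset (Set (V n))) :
    Finset (Set (V (n + 1))) :=
  F.image (fun σ => graphMap f '' σ) ∪ Δ.image (upCone f)

/-- The special ray `ℝ₊·e` of a tropical modification. -/
def specialRay (n : ℕ) : Set (V (n + 1)) := {y | ∃ t : ℝ, 0 ≤ t ∧ y = t • eVecR n}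

/-! ### Basic infrastructure -/

section Basics
variable {n : ℕ}

lemma intVec_injective {n : ℕ} : Function.Injective (intVec (n := n)) := by
  intro a b h
  funext i
  have : ((a i : ℝ)) = (b i : ℝ) := congrFun h i
  exact_mod_cast this

lemma intVec_smul {n : ℕ} (k : ℤ) (a : Fin n → ℤ) :
    intVec (k • a) = (k : ℝ) • intVec a := by
  funext i; simp [intVec]

lemma snoc_add (x y : V n) (a b : ℝ) :
    (Fin.snoc x a : V (n+1)) + Fin.snoc y b = Fin.snoc (x + y) (a + b) := by
  funext i
  refine Fin.lastCases ?_ (fun j => ?_) i <;> simp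

lemma snoc_smul (c : ℝ) (x : V n) (a : ℝ) :
    c • (Fin.snoc x a : V (n+1)) = Fin.snoc (c • x) (c * a) := by
  funext i
  refine Fin.lastCases ?_ (fun j => ?_) i <;> simp

lemma snoc_zero : (Fin.snoc (0 : V n) 0 : V (n+1)) = 0 := by
  funext i
  refine Fin.lastCases ?_ (fun j => ?_) i <;> simp

lemma intVec_snoc (v : Fin n → ℤ) (m : ℤ) :
    intVec (Fin.snoc v m : Fin (n+1) → ℤ) = Fin.snoc (intVec v) (m : ℝ) := by
  funext i
  refine Fin.lastCases ?_ (fun j => ?_) i <;> simp [intVec]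

/-- The projection `ℝ^{n+1} → ℝ^n` forgetting the last coordinate. -/
def projL (n : ℕ) : V (n+1) →ₗ[ℝ] V n := LinearMap.funLeft ℝ ℝ Fin.castSucc

lemma projL_apply (y : V (n+1)) (i : Fin n) : projL n y i = y i.castSucc := rfl

lemma projL_snoc (x : V n) (a : ℝ) : projL n (Fin.snoc x a : V (n+1)) = x := by
  funext i; simp [projL_apply]

/-- The last coordinate, as a linear form. -/
def lastL (n : ℕ) : V (n+1) →ₗ[ℝ] ℝ := LinearMap.proj (Fin.last n)

lemma lastL_snoc (x : V n) (a : ℝ) : lastL n (Fin.snoc x a : V (n+1)) = a := by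
  simp [lastL]

lemma snoc_eta (y : V (n+1)) : (Fin.snoc (projL n y) (lastL n y) : V (n+1)) = y := by
  funext i
  refine Fin.lastCases ?_ (fun j => ?_) i
  · simp [lastL]
  · simp [projL_apply]

lemma pairR_add (ℓ : Fin n → ℤ) (x y : V n) :
    pairR ℓ (x + y) = pairR ℓ x + pairR ℓ y := by
  simp [pairR, mul_add, Finset.sum_add_distrib]

lemma pairR_smul (ℓ : Fin n → ℤ) (c : ℝ) (x : V n) :
    pairR ℓ (c • x) = c * pairR ℓ x := by
  simp only [pairR, Pi.smul_apply, smul_eq_mul, Finset.mul_sum]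
  exact Finset.sum_congr rfl fun i _ => by ring

/-- `pairR ℓ` as a linear form. -/
def pairL (ℓ : Fin n → ℤ) : V n →ₗ[ℝ] ℝ where
  toFun := pairR ℓ
  map_add' x y := pairR_add ℓ x y
  map_smul' c x := pairR_smul ℓ c x

lemma pairL_apply (ℓ : Fin n → ℤ) (x : V n) : pairL ℓ x = pairR ℓ x := rfl

lemma pairR_intVec (ℓ v : Fin n → ℤ) : pairR ℓ (intVec v) = (pairZ ℓ v : ℤ) := by
  unfold pairR pairZ intVec
  push_cast
  rfl

/-- The graph of the linear form `pairR ℓ`, as a linear map `ℝ^n → ℝ^{n+1}`. -/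
def graphL (ℓ : Fin n → ℤ) : V n →ₗ[ℝ] V (n+1) :=
  LinearMap.pi (fun i : Fin (n+1) =>
    Fin.lastCases (motive := fun _ => V n →ₗ[ℝ] ℝ) (pairL ℓ)
      (fun j => LinearMap.proj j) i)

lemma graphL_apply (ℓ : Fin n → ℤ) (x : V n) :
    graphL ℓ x = Fin.snoc x (pairR ℓ x) := by
  funext i
  refine Fin.lastCases ?_ (fun j => ?_) i
  · simp [graphL, pairL_apply]
  · simp [graphL]

lemma projL_graphL (ℓ : Fin n → ℤ) (x : V n) : projL n (graphL ℓ x) = x := by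
  rw [graphL_apply, projL_snoc]

lemma graphL_injective (ℓ : Fin n → ℤ) : Function.Injective (graphL ℓ) := by
  intro a b h
  have := congrArg (projL n) h
  rwa [projL_graphL, projL_graphL] at this

lemma projL_eVecR : projL n (eVecR n) = 0 := by rw [eVecR, projL_snoc]

lemma lastL_eVecR : lastL n (eVecR n) = 1 := by rw [eVecR, lastL_snoc]

lemma eVecR_ne_zero : eVecR n ≠ 0 := by
  intro h
  have := congrArg (lastL n) h
  rw [lastL_eVecR] at this
  simp at this

lemma projL_graphMap (f : V n → ℝ) (x : V n) : projL n (graphMap f x) = x := by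
  rw [graphMap, projL_snoc]

lemma lastL_graphMap (f : V n → ℝ) (x : V n) : lastL n (graphMap f x) = f x := by
  rw [graphMap, lastL_snoc]

lemma graphMap_injective (f : V n → ℝ) : Function.Injective (graphMap f) := by
  intro a b h
  have := congrArg (projL n) h
  rwa [projL_graphMap, projL_graphMap] at this

end Basics

/-! ### Rational cones -/

section Cones
variable {n : ℕ}

/-- The cone generated by a finite set of integral vectors. -/
def coneOf (S : Finset (Fin n → ℤ)) : Set (V n) :=
  {x | ∃ lam : (Fin n → ℤ) → ℝ, (∀ v, 0 ≤ lam v) ∧ x = ∑ v ∈ S, lam v • intVec v}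

lemma isRationalCone_iff {σ : Set (V n)} :
    IsRationalCone σ ↔ ∃ S : Finset (Fin n → ℤ), σ = coneOf S := Iff.rfl

lemma zero_mem_coneOf (S : Finset (Fin n → ℤ)) : (0 : V n) ∈ coneOf S :=
  ⟨0, fun _ => le_refl 0, by simp⟩

lemma zero_mem_of_rational {σ : Set (V n)} (h : IsRationalCone σ) : (0 : V n) ∈ σ := by
  obtain ⟨S, rfl⟩ := h
  exact zero_mem_coneOf S

lemma gen_mem_coneOf {S : Finset (Fin n → ℤ)} {v : Fin n → ℤ} (hv : v ∈ S) :
    intVec v ∈ coneOf S := by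
  refine ⟨fun w => if w = v then 1 else 0, fun w => by positivity, ?_⟩
  rw [Finset.sum_eq_single v]
  · simp
  · intro w _ hw; simp [hw]
  · intro h; exact absurd hv h

lemma add_mem_coneOf {S : Finset (Fin n → ℤ)} {x y : V n}
    (hx : x ∈ coneOf S) (hy : y ∈ coneOf S) : x + y ∈ coneOf S := by
  obtain ⟨a, ha, rfl⟩ := hx
  obtain ⟨b, hb, rfl⟩ := hy
  refine ⟨a + b, fun v => add_nonneg (ha v) (hb v), ?_⟩
  rw [← Finset.sum_add_distrib]
  exact Finset.sum_congr rfl fun v _ => by simp [add_smul]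

lemma smul_mem_coneOf {S : Finset (Fin n → ℤ)} {x : V n} {c : ℝ}
    (hc : 0 ≤ c) (hx : x ∈ coneOf S) : c • x ∈ coneOf S := by
  obtain ⟨a, ha, rfl⟩ := hx
  refine ⟨fun v => c * a v, fun v => mul_nonneg hc (ha v), ?_⟩
  rw [Finset.smul_sum]
  exact Finset.sum_congr rfl fun v _ => by rw [smul_smul]

lemma sum_smul_mem_coneOf {S : Finset (Fin n → ℤ)} {ι : Type*} (s : Finset ι)
    (w : ι → ℝ) (g : ι → V n) (hw : ∀ i ∈ s, 0 ≤ w i) (hg : ∀ i ∈ s, g i ∈ coneOf S) :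
    ∑ i ∈ s, w i • g i ∈ coneOf S := by
  classical
  induction s using Finset.induction_on with
  | empty => simpa using zero_mem_coneOf S
  | insert a s' hni ih =>
    rw [Finset.sum_insert hni]
    exact add_mem_coneOf
      (smul_mem_coneOf (hw a (Finset.mem_insert_self a s')) (hg a (Finset.mem_insert_self a s')))
      (ih (fun i hi => hw i (Finset.mem_insert_of_mem hi))
          (fun i hi => hg i (Finset.mem_insert_of_mem hi)))

lemma linear_apply_coneOf {S : Finset (Fin n → ℤ)} {x : V n} (ℓ : V n →ₗ[ℝ] ℝ)
    {lam : (Fin n → ℤ) → ℝ} (hx : x = ∑ v ∈ S, lam v • intVec v) :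
    ℓ x = ∑ v ∈ S, lam v * ℓ (intVec v) := by
  rw [hx, map_sum]
  exact Finset.sum_congr rfl fun v _ => by rw [map_smul, smul_eq_mul]

/-- A strongly convex rational cone admits a linear form vanishing only at `0`;
i.e. `{0}` is a face. -/
lemma zero_isFaceOf {σ : Set (V n)} (hrat : IsRationalCone σ) (hsc : StronglyConvex σ) :
    IsFaceOf {0} σ := by
  obtain ⟨S, rfl⟩ := isRationalCone_iff.1 hrat
  classical
  set T : Finset (Fin n → ℤ) := S.filter (fun v => intVec v ≠ 0) with hT
  by_cases hTne : T.Nonempty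
  · -- separate 0 from the convex hull of the nonzero generators
    set K : Set (V n) := convexHull ℝ (↑(T.image intVec) : Set (V n)) with hK
    have h0K : (0 : V n) ∉ K := by
      intro h0
      rw [hK, Finset.convexHull_eq] at h0
      obtain ⟨w, hw0, hw1, hwc⟩ := h0
      rw [Finset.centerMass_eq_of_sum_1 _ _ hw1] at hwc
      simp only [id] at hwc
      -- find a generator with positive weight
      have : ∃ u ∈ T.image intVec, w u ≠ 0 := by
        by_contra hc
        push_neg at hc
        rw [Finset.sum_eq_zero (fun y hy => hc y hy)] at hw1
        norm_num at hw1
      obtain ⟨u, huT, hwu⟩ := this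
      have hwu' : 0 < w u := lt_of_le_of_ne (hw0 u huT) (Ne.symm hwu)
      have husum : ∑ y ∈ (T.image intVec).erase u, w y • y + w u • u = 0 := by
        rw [Finset.sum_erase_add _ _ huT]; exact hwc
      have hmem : ∑ y ∈ (T.image intVec).erase u, w y • y ∈ coneOf S := by
        refine sum_smul_mem_coneOf _ _ _ (fun y hy => hw0 y (Finset.mem_of_mem_erase hy)) ?_
        intro y hy
        obtain ⟨v, hvT, rfl⟩ := Finset.mem_image.1 (Finset.mem_of_mem_erase hy)
        exact gen_mem_coneOf (Finset.mem_filter.1 hvT).1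
      have huσ : u ∈ coneOf S := by
        obtain ⟨v, hvT, rfl⟩ := Finset.mem_image.1 huT
        exact gen_mem_coneOf (Finset.mem_filter.1 hvT).1
      have hneg : -u ∈ coneOf S := by
        have h1 : w u • u = -∑ y ∈ (T.image intVec).erase u, w y • y :=
          eq_neg_of_add_eq_zero_right husum
        have h2 : u = (w u)⁻¹ • (w u • u) := by
          rw [smul_smul, inv_mul_cancel₀ (ne_of_gt hwu'), one_smul]
        have h4 : u = -((w u)⁻¹ • ∑ y ∈ (T.image intVec).erase u, w y • y) := by
          have h5 := congrArg (fun z => (w u)⁻¹ • z) h1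
          simpa [smul_smul, inv_mul_cancel₀ (ne_of_gt hwu'), smul_neg] using h5
        rw [h4, neg_neg]
        exact smul_mem_coneOf (le_of_lt (inv_pos.2 hwu')) hmem
      have hmem0 : u ∈ coneOf S ∩ (-coneOf S) := ⟨huσ, by rwa [Set.mem_neg]⟩
      have hsc' : coneOf S ∩ (-coneOf S) = {(0 : V n)} := hsc
      rw [hsc'] at hmem0
      have : u = 0 := hmem0
      obtain ⟨v, hvT, rfl⟩ := Finset.mem_image.1 huT
      exact (Finset.mem_filter.1 hvT).2 this
    have hKconv : Convex ℝ K := convex_convexHull ℝ _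
    have hKcl : IsClosed K := by
      have : (↑(T.image intVec) : Set (V n)).Finite := (T.image intVec).finite_toSet
      exact (this.isCompact_convexHull ℝ).isClosed
    obtain ⟨g, u₀, hg0, hgK⟩ := geometric_hahn_banach_point_closed hKconv hKcl h0K
    have hu₀ : 0 < u₀ := by simpa using hg0
    have hgen : ∀ v ∈ S, 0 ≤ g.toLinearMap (intVec v) ∧
        (intVec v ≠ 0 → 0 < g.toLinearMap (intVec v)) := by
      intro v hv
      by_cases hv0 : intVec v = 0
      · simp [hv0]
      · have hvT : v ∈ T := Finset.mem_filter.2 ⟨hv, hv0⟩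
        have : intVec v ∈ K :=
          subset_convexHull ℝ _ (by simpa using Finset.mem_image_of_mem intVec hvT)
        have := hgK _ this
        constructor
        · exact le_of_lt (lt_trans hu₀ this)
        · intro _; exact lt_trans hu₀ this
    refine ⟨g.toLinearMap, ?_, ?_⟩
    · rintro x ⟨lam, hlam, hx⟩
      rw [linear_apply_coneOf g.toLinearMap hx]
      exact Finset.sum_nonneg fun v hv => mul_nonneg (hlam v) ((hgen v hv).1)
    · ext x
      simp only [Set.mem_inter_iff, Set.mem_setOf_eq, Set.mem_singleton_iff]
      constructor
      · rintro rfl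
        exact ⟨zero_mem_coneOf S, by simp⟩
      · rintro ⟨⟨lam, hlam, hx⟩, hℓx⟩
        rw [linear_apply_coneOf g.toLinearMap hx] at hℓx
        have hterm : ∀ v ∈ S, lam v * g.toLinearMap (intVec v) = 0 := by
          intro v hv
          have := (Finset.sum_eq_zero_iff_of_nonneg
            (fun v hv => mul_nonneg (hlam v) ((hgen v hv).1))).1 hℓx
          exact this v hv
        rw [hx]
        refine Finset.sum_eq_zero fun v hv => ?_
        by_cases hv0 : intVec v = 0
        · simp [hv0]
        · have hpos := (hgen v hv).2 hv0
          have : lam v = 0 := by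
            by_contra hlv
            have : 0 < lam v * g.toLinearMap (intVec v) :=
              mul_pos (lt_of_le_of_ne (hlam v) (Ne.symm hlv)) hpos
            rw [hterm v hv] at this
            exact lt_irrefl 0 this
          simp [this]
  · -- all generators are zero: σ = {0}
    have hσ0 : coneOf S = {0} := by
      ext x
      simp only [Set.mem_singleton_iff]
      constructor
      · rintro ⟨lam, hlam, rfl⟩
        refine Finset.sum_eq_zero fun v hv => ?_
        have : intVec v = 0 := by
          by_contra hv0
          exact hTne ⟨v, Finset.mem_filter.2 ⟨hv, hv0⟩⟩
        simp [this]
      · rintro rfl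
        exact zero_mem_coneOf S
    exact ⟨0, fun x _ => le_refl 0, by rw [hσ0]; ext x; simp⟩



lemma subset_of_isFaceOf {τ σ : Set (V n)} (h : IsFaceOf τ σ) : τ ⊆ σ := by
  obtain ⟨ℓ, _, rfl⟩ := h
  exact Set.inter_subset_left

/-- Transitivity of faces for rational cones. -/
lemma isFaceOf_trans {σ τ ρ : Set (V n)} (hrat : IsRationalCone σ)
    (hτ : IsFaceOf τ σ) (hρ : IsFaceOf ρ τ) : IsFaceOf ρ σ := by
  obtain ⟨S, rfl⟩ := isRationalCone_iff.1 hrat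
  obtain ⟨ℓ₁, h₁pos, rfl⟩ := hτ
  obtain ⟨ℓ₂, h₂pos, rfl⟩ := hρ
  classical
  set T : Finset (Fin n → ℤ) := S.filter (fun v => 0 < ℓ₁ (intVec v)) with hT
  set N : ℝ := if h : T.Nonempty then T.sup' h (fun v => (1 - ℓ₂ (intVec v)) / ℓ₁ (intVec v))
    else 0 with hN
  have hkey : ∀ v ∈ S, 0 < ℓ₁ (intVec v) → 0 < ℓ₂ (intVec v) + N * ℓ₁ (intVec v) := by
    intro v hv hpos
    have hvT : v ∈ T := Finset.mem_filter.2 ⟨hv, hpos⟩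
    have hne : T.Nonempty := ⟨v, hvT⟩
    have hle : (1 - ℓ₂ (intVec v)) / ℓ₁ (intVec v) ≤ N := by
      rw [hN, dif_pos hne]
      exact Finset.le_sup' (fun v => (1 - ℓ₂ (intVec v)) / ℓ₁ (intVec v)) hvT
    have : 1 - ℓ₂ (intVec v) ≤ N * ℓ₁ (intVec v) := by
      rwa [div_le_iff₀ hpos] at hle
    linarith
  have hℓ₁nonneg : ∀ v ∈ S, 0 ≤ ℓ₁ (intVec v) := fun v hv => h₁pos _ (gen_mem_coneOf hv)
  have hzero : ∀ v ∈ S, ℓ₁ (intVec v) = 0 → 0 ≤ ℓ₂ (intVec v) := by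
    intro v hv h0
    exact h₂pos _ ⟨gen_mem_coneOf hv, h0⟩
  have htermnn : ∀ v ∈ S, 0 ≤ ℓ₂ (intVec v) + N * ℓ₁ (intVec v) := by
    intro v hv
    rcases lt_or_eq_of_le (hℓ₁nonneg v hv) with hpos | heq
    · exact le_of_lt (hkey v hv hpos)
    · rw [← heq]
      simpa using hzero v hv heq.symm
  refine ⟨ℓ₂ + N • ℓ₁, ?_, ?_⟩
  · rintro x ⟨lam, hlam, hx⟩
    rw [linear_apply_coneOf _ hx]
    refine Finset.sum_nonneg fun v hv => mul_nonneg (hlam v) ?_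
    simpa using htermnn v hv
  · ext x
    simp only [Set.mem_inter_iff, Set.mem_setOf_eq]
    constructor
    · rintro ⟨⟨hxσ, h1x⟩, h2x⟩
      refine ⟨hxσ, ?_⟩
      simp only [LinearMap.add_apply, LinearMap.smul_apply, smul_eq_mul]
      rw [h1x, h2x]; ring
    · rintro ⟨hxσ, hℓx⟩
      obtain ⟨lam, hlam, hx⟩ := hxσ
      have hsum : ∑ v ∈ S, lam v * ((ℓ₂ + N • ℓ₁) (intVec v)) = 0 := by
        rw [← linear_apply_coneOf _ hx]; exact hℓx
      have hterm0 : ∀ v ∈ S, lam v * ((ℓ₂ + N • ℓ₁) (intVec v)) = 0 := by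
        intro v hv
        exact (Finset.sum_eq_zero_iff_of_nonneg
          (fun v hv => mul_nonneg (hlam v) (by simpa using htermnn v hv))).1 hsum v hv
      have hlamT : ∀ v ∈ S, 0 < ℓ₁ (intVec v) → lam v = 0 := by
        intro v hv hpos
        by_contra hlv
        have h1 : 0 < lam v * ((ℓ₂ + N • ℓ₁) (intVec v)) := by
          refine mul_pos (lt_of_le_of_ne (hlam v) (Ne.symm hlv)) ?_
          simpa using hkey v hv hpos
        rw [hterm0 v hv] at h1
        exact lt_irrefl 0 h1
      have hℓ₁x : ℓ₁ x = 0 := by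
        rw [linear_apply_coneOf _ hx]
        refine Finset.sum_eq_zero fun v hv => ?_
        rcases lt_or_eq_of_le (hℓ₁nonneg v hv) with hpos | heq
        · rw [hlamT v hv hpos]; ring
        · rw [← heq]; ring
      have hℓ₂x : ℓ₂ x = 0 := by
        have h2 : (ℓ₂ + N • ℓ₁) x = ℓ₂ x + N * ℓ₁ x := by simp
        rw [h2, hℓ₁x] at hℓx
        linarith
      exact ⟨⟨⟨lam, hlam, hx⟩, hℓ₁x⟩, hℓ₂x⟩

end Cones

/-! ### Graphs and upCones -/

section Graphs
variable {n : ℕ} {f : V n → ℝ}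

lemma graphMap_eq_graphL {σ : Set (V n)} {ℓ : Fin n → ℤ}
    (hfl : ∀ x ∈ σ, f x = pairR ℓ x) {x : V n} (hx : x ∈ σ) :
    graphMap f x = graphL ℓ x := by
  rw [graphMap, graphL_apply, hfl x hx]

lemma graph_image_eq {σ : Set (V n)} {ℓ : Fin n → ℤ}
    (hfl : ∀ x ∈ σ, f x = pairR ℓ x) :
    graphMap f '' σ = graphL ℓ '' σ :=
  Set.image_congr (fun x hx => graphMap_eq_graphL hfl hx)

lemma mem_graph_iff {σ : Set (V n)} {y : V (n+1)} :
    y ∈ graphMap f '' σ ↔ projL n y ∈ σ ∧ lastL n y = f (projL n y) := by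
  constructor
  · rintro ⟨x, hx, rfl⟩
    rw [projL_graphMap, lastL_graphMap]
    exact ⟨hx, rfl⟩
  · rintro ⟨h1, h2⟩
    refine ⟨projL n y, h1, ?_⟩
    rw [graphMap, ← h2, snoc_eta]

lemma graphMap_add_smul_e (x : V n) (t : ℝ) :
    graphMap f x + t • eVecR n = Fin.snoc x (f x + t) := by
  rw [graphMap, eVecR, snoc_smul, snoc_add]
  congr 1 <;> simp

lemma mem_upCone_iff {δ : Set (V n)} {y : V (n+1)} :
    y ∈ upCone f δ ↔ projL n y ∈ δ ∧ f (projL n y) ≤ lastL n y := by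
  constructor
  · rintro ⟨x, hx, t, ht, rfl⟩
    rw [graphMap_add_smul_e, projL_snoc, lastL_snoc]
    exact ⟨hx, by linarith⟩
  · rintro ⟨h1, h2⟩
    refine ⟨projL n y, h1, lastL n y - f (projL n y), by linarith, ?_⟩
    rw [graphMap_add_smul_e]
    have : f (projL n y) + (lastL n y - f (projL n y)) = lastL n y := by ring
    rw [this, snoc_eta]

lemma graph_subset_graph_iff {σ σ' : Set (V n)} :
    graphMap f '' σ ⊆ graphMap f '' σ' ↔ σ ⊆ σ' := by
  constructor
  · intro h x hx
    obtain ⟨x', hx', hee⟩ := h ⟨x, hx, rfl⟩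
    rwa [← graphMap_injective f hee]
  · intro h
    exact Set.image_mono h

lemma graph_image_injective {σ σ' : Set (V n)}
    (h : graphMap f '' σ = graphMap f '' σ') : σ = σ' :=
  Set.Subset.antisymm (graph_subset_graph_iff.1 h.le) (graph_subset_graph_iff.1 h.ge)

lemma f_zero {σ : Set (V n)} {ℓ : Fin n → ℤ}
    (hfl : ∀ x ∈ σ, f x = pairR ℓ x) (h0 : (0 : V n) ∈ σ) : f 0 = 0 := by
  rw [hfl 0 h0, ← pairL_apply, map_zero]

lemma graphMap_zero (hf0 : f 0 = 0) : graphMap f 0 = 0 := by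
  rw [graphMap, hf0, snoc_zero]

lemma eVec_mem_upCone {δ : Set (V n)} (h0 : (0 : V n) ∈ δ) (hf0 : f 0 = 0) :
    eVecR n ∈ upCone f δ :=
  ⟨0, h0, 1, zero_le_one, by rw [graphMap_zero hf0, one_smul, zero_add]⟩

lemma upCone_zero (hf0 : f 0 = 0) : upCone f {(0 : V n)} = specialRay n := by
  ext y
  constructor
  · rintro ⟨x, hx, t, ht, rfl⟩
    rw [Set.mem_singleton_iff] at hx
    subst hx
    rw [graphMap_zero hf0, zero_add]
    exact ⟨t, ht, rfl⟩
  · rintro ⟨t, ht, rfl⟩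
    exact ⟨0, rfl, t, ht, by rw [graphMap_zero hf0, zero_add]⟩

lemma eVec_not_mem_graph {σ : Set (V n)} (hf0 : f 0 = 0) :
    eVecR n ∉ graphMap f '' σ := by
  intro h
  rw [mem_graph_iff] at h
  rw [projL_eVecR, lastL_eVecR, hf0] at h
  exact one_ne_zero h.2

lemma graph_ne_upCone {σ δ : Set (V n)} (h0 : (0 : V n) ∈ δ) (hf0 : f 0 = 0) :
    graphMap f '' σ ≠ upCone f δ := by
  intro h
  exact eVec_not_mem_graph hf0 (h ▸ eVec_mem_upCone h0 hf0)

lemma graph_inter_graph {σ σ' : Set (V n)} :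
    (graphMap f '' σ) ∩ (graphMap f '' σ') = graphMap f '' (σ ∩ σ') := by
  ext y
  simp only [Set.mem_inter_iff, mem_graph_iff]
  tauto

lemma graph_inter_upCone {σ δ : Set (V n)} :
    (graphMap f '' σ) ∩ upCone f δ = graphMap f '' (σ ∩ δ) := by
  ext y
  simp only [Set.mem_inter_iff, mem_graph_iff, mem_upCone_iff]
  constructor
  · rintro ⟨⟨h1, h2⟩, h3, _⟩
    exact ⟨⟨h1, h3⟩, h2⟩
  · rintro ⟨⟨h1, h3⟩, h2⟩
    exact ⟨⟨h1, h2⟩, h3, le_of_eq h2.symm⟩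

lemma upCone_inter_upCone {δ δ' : Set (V n)} :
    upCone f δ ∩ upCone f δ' = upCone f (δ ∩ δ') := by
  ext y
  simp only [Set.mem_inter_iff, mem_upCone_iff]
  tauto

lemma upCone_subset_upCone {δ δ' : Set (V n)} (h : δ ⊆ δ') :
    upCone f δ ⊆ upCone f δ' := by
  intro y hy
  rw [mem_upCone_iff] at hy ⊢
  exact ⟨h hy.1, hy.2⟩

lemma graph_subset_upCone {σ δ : Set (V n)} (h : σ ⊆ δ) :
    graphMap f '' σ ⊆ upCone f δ := by
  intro y hy
  rw [mem_graph_iff] at hy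
  rw [mem_upCone_iff]
  exact ⟨h hy.1, le_of_eq hy.2.symm⟩

lemma graph_subset_upCone_iff {σ δ : Set (V n)} :
    graphMap f '' σ ⊆ upCone f δ ↔ σ ⊆ δ := by
  refine ⟨fun h x hx => ?_, graph_subset_upCone⟩
  have := h ⟨x, hx, rfl⟩
  rw [mem_upCone_iff, projL_graphMap] at this
  exact this.1

lemma upCone_subset_graph_iff {σ δ : Set (V n)} (h0 : (0:V n) ∈ δ) (hf0 : f 0 = 0) :
    ¬ (upCone f δ ⊆ graphMap f '' σ) := by
  intro h
  exact eVec_not_mem_graph hf0 (h (eVec_mem_upCone h0 hf0))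

/-! ### Spans and dimensions -/

lemma span_graph {σ : Set (V n)} {ℓ : Fin n → ℤ}
    (hfl : ∀ x ∈ σ, f x = pairR ℓ x) :
    Submodule.span ℝ (graphMap f '' σ)
      = Submodule.map (graphL ℓ) (Submodule.span ℝ σ) := by
  rw [graph_image_eq hfl, Submodule.span_image]

lemma dimC_graph {σ : Set (V n)} {ℓ : Fin n → ℤ}
    (hfl : ∀ x ∈ σ, f x = pairR ℓ x) :
    dimC (graphMap f '' σ) = dimC σ := by
  rw [dimC, dimC, span_graph hfl]
  exact ((Submodule.span ℝ σ).equivMapOfInjective _ (graphL_injective ℓ)).symm.finrank_eq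

lemma span_upCone {δ : Set (V n)} {ℓ : Fin n → ℤ}
    (hfl : ∀ x ∈ δ, f x = pairR ℓ x) (h0 : (0 : V n) ∈ δ) :
    Submodule.span ℝ (upCone f δ)
      = Submodule.map (graphL ℓ) (Submodule.span ℝ δ) ⊔ Submodule.span ℝ {eVecR n} := by
  apply le_antisymm
  · rw [Submodule.span_le]
    rintro y ⟨x, hx, t, ht, rfl⟩
    apply Submodule.add_mem
    · apply Submodule.mem_sup_left
      rw [graphMap_eq_graphL hfl hx]
      exact Submodule.mem_map_of_mem (Submodule.subset_span hx)
    · apply Submodule.mem_sup_right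
      exact Submodule.smul_mem _ t (Submodule.subset_span rfl)
  · apply sup_le
    · rw [← Submodule.span_image, Submodule.span_le]
      rintro y ⟨x, hx, rfl⟩
      apply Submodule.subset_span
      rw [← graphMap_eq_graphL hfl hx]
      exact ⟨x, hx, 0, le_refl 0, by rw [zero_smul, add_zero]⟩
    · rw [Submodule.span_le, Set.singleton_subset_iff]
      exact Submodule.subset_span (eVec_mem_upCone h0 (f_zero hfl h0))

lemma eVec_not_mem_map_graphL (ℓ : Fin n → ℤ) (W : Submodule ℝ (V n)) :
    eVecR n ∉ Submodule.map (graphL ℓ) W := by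
  rintro ⟨z, _, hz⟩
  have hz0 : z = 0 := by
    have := congrArg (projL n) hz
    rwa [projL_graphL, projL_eVecR] at this
  rw [hz0] at hz
  rw [map_zero] at hz
  exact eVecR_ne_zero hz.symm

lemma dimC_upCone {δ : Set (V n)} {ℓ : Fin n → ℤ}
    (hfl : ∀ x ∈ δ, f x = pairR ℓ x) (h0 : (0 : V n) ∈ δ) :
    dimC (upCone f δ) = dimC δ + 1 := by
  rw [dimC, dimC, span_upCone hfl h0]
  have hdisj : Submodule.map (graphL ℓ) (Submodule.span ℝ δ) ⊓ Submodule.span ℝ {eVecR n} = ⊥ := by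
    rw [eq_bot_iff]
    intro y hy
    rw [Submodule.mem_inf] at hy
    obtain ⟨hy1, hy2⟩ := hy
    rw [Submodule.mem_span_singleton] at hy2
    obtain ⟨c, rfl⟩ := hy2
    rcases eq_or_ne c 0 with rfl | hc
    · simp
    · exfalso
      apply eVec_not_mem_map_graphL ℓ (Submodule.span ℝ δ)
      have := Submodule.smul_mem _ c⁻¹ hy1
      rwa [smul_smul, inv_mul_cancel₀ hc, one_smul] at this
  have := Submodule.finrank_sup_add_finrank_inf_eq
    (Submodule.map (graphL ℓ) (Submodule.span ℝ δ)) (Submodule.span ℝ {eVecR n})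
  rw [hdisj] at this
  rw [finrank_span_singleton eVecR_ne_zero] at this
  simp only [finrank_bot, add_zero] at this
  rw [this]
  congr 1
  exact ((Submodule.span ℝ δ).equivMapOfInjective _ (graphL_injective ℓ)).symm.finrank_eq

lemma dimC_singleton_zero : dimC ({0} : Set (V n)) = 0 := by
  rw [dimC, Submodule.span_zero_singleton ℝ]
  exact finrank_bot ℝ (V n)

lemma eq_singleton_zero_of_dimC_eq_zero {σ : Set (V n)} (h0 : (0 : V n) ∈ σ)
    (hd : dimC σ = 0) : σ = {0} := by
  have hb : Submodule.span ℝ σ = ⊥ := by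
    rw [dimC] at hd
    exact Submodule.finrank_eq_zero.1 hd
  ext x
  simp only [Set.mem_singleton_iff]
  constructor
  · intro hx
    have : x ∈ Submodule.span ℝ σ := Submodule.subset_span hx
    rw [hb, Submodule.mem_bot] at this
    exact this
  · rintro rfl; exact h0

end Graphs

/-! ### The tropical modification is a fan -/

section TM
variable {n : ℕ} {F : Finset (Set (V n))} {f : V n → ℝ} {Δ : Finset (Set (V n))}

lemma mem_TM_iff {ξ : Set (V (n+1))} :
    ξ ∈ TMfan F f Δ ↔ (∃ σ ∈ F, ξ = graphMap f '' σ) ∨ ∃ δ ∈ Δ, ξ = upCone f δ := by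
  simp only [TMfan, Finset.mem_union, Finset.mem_image]
  constructor
  · rintro (⟨σ, hσ, rfl⟩ | ⟨δ, hδ, rfl⟩)
    · exact Or.inl ⟨σ, hσ, rfl⟩
    · exact Or.inr ⟨δ, hδ, rfl⟩
  · rintro (⟨σ, hσ, rfl⟩ | ⟨δ, hδ, rfl⟩)
    · exact Or.inl ⟨σ, hσ, rfl⟩
    · exact Or.inr ⟨δ, hδ, rfl⟩

lemma graph_mem_TM {σ : Set (V n)} (hσ : σ ∈ F) : graphMap f '' σ ∈ TMfan F f Δ :=
  mem_TM_iff.2 (Or.inl ⟨σ, hσ, rfl⟩)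

lemma upCone_mem_TM {δ : Set (V n)} (hδ : δ ∈ Δ) : upCone f δ ∈ TMfan F f Δ :=
  mem_TM_iff.2 (Or.inr ⟨δ, hδ, rfl⟩)

/-- Lifting a face relation to graphs. -/
lemma face_lift_graph {τ σ : Set (V n)} (h : IsFaceOf τ σ) :
    IsFaceOf (graphMap f '' τ) (graphMap f '' σ) := by
  obtain ⟨ℓ₀, hpos, rfl⟩ := h
  refine ⟨ℓ₀ ∘ₗ projL n, ?_, ?_⟩
  · rintro y ⟨x, hx, rfl⟩
    rw [LinearMap.comp_apply, projL_graphMap]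
    exact hpos x hx
  · ext y
    simp only [mem_graph_iff, Set.mem_inter_iff, Set.mem_setOf_eq, LinearMap.comp_apply]
    tauto

/-- Lifting a face relation to upper cones. -/
lemma face_lift_upCone {τ δ : Set (V n)} (h : IsFaceOf τ δ) :
    IsFaceOf (upCone f τ) (upCone f δ) := by
  obtain ⟨ℓ₀, hpos, rfl⟩ := h
  refine ⟨ℓ₀ ∘ₗ projL n, ?_, ?_⟩
  · intro y hy
    rw [mem_upCone_iff] at hy
    exact hpos _ hy.1
  · ext y
    simp only [mem_upCone_iff, Set.mem_inter_iff, Set.mem_setOf_eq, LinearMap.comp_apply]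
    tauto

/-- The graph of a face of `δ` is a face of the upper cone over `δ`. -/
lemma graph_face_of_upCone {τ δ : Set (V n)} {ℓ : Fin n → ℤ}
    (hfl : ∀ x ∈ δ, f x = pairR ℓ x) (h : IsFaceOf τ δ) :
    IsFaceOf (graphMap f '' τ) (upCone f δ) := by
  obtain ⟨ℓ₀, hpos, rfl⟩ := h
  refine ⟨ℓ₀ ∘ₗ projL n + (lastL n - pairL ℓ ∘ₗ projL n), ?_, ?_⟩
  · intro y hy
    rw [mem_upCone_iff] at hy
    have h1 : 0 ≤ ℓ₀ (projL n y) := hpos _ hy.1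
    have h2 : pairR ℓ (projL n y) ≤ lastL n y := by
      rw [← hfl _ hy.1]; exact hy.2
    simp only [LinearMap.add_apply, LinearMap.comp_apply, LinearMap.sub_apply, pairL_apply]
    linarith
  · ext y
    simp only [mem_graph_iff, mem_upCone_iff, Set.mem_inter_iff, Set.mem_setOf_eq,
      LinearMap.add_apply, LinearMap.comp_apply, LinearMap.sub_apply, pairL_apply]
    constructor
    · rintro ⟨⟨h1, h2⟩, h3⟩
      refine ⟨⟨h1, le_of_eq h3.symm⟩, ?_⟩
      rw [h2, ← hfl _ h1, h3]
      ring
    · rintro ⟨⟨h1, h2⟩, h3⟩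
      have h1' : 0 ≤ ℓ₀ (projL n y) := hpos _ h1
      have h2' : 0 ≤ lastL n y - pairR ℓ (projL n y) := by
        rw [← hfl _ h1]; linarith
      have h4 : ℓ₀ (projL n y) = 0 := by linarith
      have h5 : lastL n y = f (projL n y) := by
        rw [hfl _ h1]; linarith
      exact ⟨⟨h1, h4⟩, h5⟩

/-- `graphL` applied to an integral vector. -/
lemma graphL_intVec (ℓ v : Fin n → ℤ) :
    graphL ℓ (intVec v) = intVec (Fin.snoc v (pairZ ℓ v) : Fin (n+1) → ℤ) := by
  rw [graphL_apply, pairR_intVec, intVec_snoc]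

lemma snocZ_injective (ℓ : Fin n → ℤ) :
    Function.Injective (fun v : Fin n → ℤ => (Fin.snoc v (pairZ ℓ v) : Fin (n+1) → ℤ)) := by
  intro a b h
  funext i
  have := congrFun h i.castSucc
  simpa using this

lemma graphL_image_coneOf (ℓ : Fin n → ℤ) (S : Finset (Fin n → ℤ)) :
    graphL ℓ '' (coneOf S)
      = coneOf (S.image (fun v => (Fin.snoc v (pairZ ℓ v) : Fin (n+1) → ℤ))) := by
  classical
  ext y
  constructor
  · rintro ⟨x, ⟨lam, hlam, rfl⟩, rfl⟩
    refine ⟨fun w => lam (fun i => w i.castSucc), fun w => hlam _, ?_⟩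
    rw [map_sum, Finset.sum_image (fun a _ b _ h => snocZ_injective ℓ h)]
    refine Finset.sum_congr rfl fun v _ => ?_
    rw [map_smul, graphL_intVec]
    congr 1
    congr 1
    funext i
    simp
  · rintro ⟨lam, hlam, rfl⟩
    rw [Finset.sum_image (fun a _ b _ h => snocZ_injective ℓ h)]
    refine ⟨∑ v ∈ S, lam (Fin.snoc v (pairZ ℓ v)) • intVec v,
      ⟨fun v => lam (Fin.snoc v (pairZ ℓ v)), fun v => hlam _, rfl⟩, ?_⟩
    rw [map_sum]
    exact Finset.sum_congr rfl fun v _ => by rw [map_smul, graphL_intVec]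

lemma snocZ01_not_mem_image (ℓ : Fin n → ℤ) (S : Finset (Fin n → ℤ)) :
    (Fin.snoc (0 : Fin n → ℤ) 1 : Fin (n+1) → ℤ)
      ∉ S.image (fun v => (Fin.snoc v (pairZ ℓ v) : Fin (n+1) → ℤ)) := by
  rw [Finset.mem_image]
  rintro ⟨v, _, hv⟩
  have hv0 : v = 0 := by
    funext i
    have := congrFun hv i.castSucc
    simpa using this
  subst hv0
  have := congrFun hv (Fin.last n)
  simp only [Fin.snoc_last] at this
  rw [show pairZ ℓ (0 : Fin n → ℤ) = 0 by simp [pairZ]] at this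
  exact zero_ne_one this

lemma intVec_snocZ01 : intVec (Fin.snoc (0 : Fin n → ℤ) 1 : Fin (n+1) → ℤ) = eVecR n := by
  rw [intVec_snoc, intVec_zero, eVecR]
  norm_num

/-- The upper cone over a rational cone is a rational cone. -/
lemma upCone_coneOf {ℓ : Fin n → ℤ} {S : Finset (Fin n → ℤ)}
    (hfl : ∀ x ∈ coneOf S, f x = pairR ℓ x) :
    upCone f (coneOf S)
      = coneOf (insert (Fin.snoc (0 : Fin n → ℤ) 1)
          (S.image (fun v => (Fin.snoc v (pairZ ℓ v) : Fin (n+1) → ℤ)))) := by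
  classical
  ext y
  constructor
  · rintro ⟨x, hx, t, ht, rfl⟩
    have hgx : graphMap f x ∈ graphL ℓ '' (coneOf S) := by
      rw [graphMap_eq_graphL hfl hx]
      exact ⟨x, hx, rfl⟩
    rw [graphL_image_coneOf] at hgx
    obtain ⟨lam, hlam, hsum⟩ := hgx
    refine ⟨fun w => if w = Fin.snoc (0 : Fin n → ℤ) 1 then t else lam w, ?_, ?_⟩
    · intro w
      dsimp only
      split
      · exact ht
      · exact hlam w
    · rw [Finset.sum_insert (snocZ01_not_mem_image ℓ S)]
      have : ∑ w ∈ S.image (fun v => (Fin.snoc v (pairZ ℓ v) : Fin (n+1) → ℤ)),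
          (if w = Fin.snoc (0 : Fin n → ℤ) 1 then t else lam w) • intVec w
          = ∑ w ∈ S.image (fun v => (Fin.snoc v (pairZ ℓ v) : Fin (n+1) → ℤ)),
            lam w • intVec w := by
        refine Finset.sum_congr rfl fun w hw => ?_
        rw [if_neg]
        intro hcon
        rw [hcon] at hw
        exact snocZ01_not_mem_image ℓ S hw
      rw [this]
      dsimp only
      rw [if_pos rfl, intVec_snocZ01, ← hsum]
      exact add_comm _ _
  · rintro ⟨lam, hlam, rfl⟩
    rw [Finset.sum_insert (snocZ01_not_mem_image ℓ S), intVec_snocZ01]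
    have hx : ∑ w ∈ S.image (fun v => (Fin.snoc v (pairZ ℓ v) : Fin (n+1) → ℤ)),
        lam w • intVec w ∈ graphL ℓ '' (coneOf S) := by
      rw [graphL_image_coneOf]
      exact ⟨lam, hlam, rfl⟩
    obtain ⟨x, hxS, hxe⟩ := hx
    refine ⟨x, hxS, lam (Fin.snoc (0 : Fin n → ℤ) 1), hlam _, ?_⟩
    rw [graphMap_eq_graphL hfl hxS, hxe]
    exact add_comm _ _

end TM

/-! ### The tropical modification is a fan, II -/

section TM2
variable {n : ℕ} {F : Finset (Set (V n))} {f : V n → ℝ} {Δ : Finset (Set (V n))}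

lemma graph_rep {σ : Set (V n)} {y : V (n+1)} (h : y ∈ graphMap f '' σ) :
    projL n y ∈ σ ∧ y = graphMap f (projL n y) := by
  obtain ⟨x, hx, rfl⟩ := h
  rw [projL_graphMap]
  exact ⟨hx, rfl⟩

lemma upCone_rep {δ : Set (V n)} {y : V (n+1)} (h : y ∈ upCone f δ) :
    projL n y ∈ δ ∧ 0 ≤ lastL n y - f (projL n y) ∧
      y = graphMap f (projL n y) + (lastL n y - f (projL n y)) • eVecR n := by
  rw [mem_upCone_iff] at h
  refine ⟨h.1, by linarith [h.2], ?_⟩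
  rw [graphMap_add_smul_e]
  have : f (projL n y) + (lastL n y - f (projL n y)) = lastL n y := by ring
  rw [this, snoc_eta]

lemma f_zero_of_fan (hFan : IsFan F) (hf : ConewiseLinear F f) : f 0 = 0 := by
  obtain ⟨σ, hσ⟩ := hFan.nonempty
  obtain ⟨ℓ, hℓ⟩ := hf σ hσ
  exact f_zero hℓ (zero_mem_of_rational (hFan.rat σ hσ))

lemma graph_stronglyConvex {σ : Set (V n)} (hsc : StronglyConvex σ)
    (h0 : (0 : V n) ∈ σ) (hf0 : f 0 = 0) : StronglyConvex (graphMap f '' σ) := by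
  ext y
  simp only [Set.mem_inter_iff, Set.mem_neg, Set.mem_singleton_iff]
  constructor
  · rintro ⟨h1, h2⟩
    rw [mem_graph_iff] at h1 h2
    have hp : projL n y ∈ σ ∩ (-σ) := by
      refine ⟨h1.1, ?_⟩
      rw [Set.mem_neg, ← map_neg]
      exact h2.1
    rw [hsc, Set.mem_singleton_iff] at hp
    have hl : lastL n y = 0 := by
      have := h1.2
      rw [hp, hf0] at this
      exact this
    rw [← snoc_eta y, hp, hl, snoc_zero]
  · rintro rfl
    have h0' : (0 : V (n+1)) ∈ graphMap f '' σ := by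
      rw [mem_graph_iff, map_zero, map_zero, hf0]
      exact ⟨h0, rfl⟩
    rw [neg_zero]
    exact ⟨h0', h0'⟩

lemma zero_mem_upCone {δ : Set (V n)} (h0 : (0 : V n) ∈ δ) (hf0 : f 0 = 0) :
    (0 : V (n+1)) ∈ upCone f δ := by
  rw [mem_upCone_iff, map_zero, map_zero, hf0]
  exact ⟨h0, le_refl 0⟩

lemma upCone_stronglyConvex {δ : Set (V n)} (hsc : StronglyConvex δ)
    (h0 : (0 : V n) ∈ δ) (hf0 : f 0 = 0) : StronglyConvex (upCone f δ) := by
  ext y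
  simp only [Set.mem_inter_iff, Set.mem_neg, Set.mem_singleton_iff]
  constructor
  · rintro ⟨h1, h2⟩
    rw [mem_upCone_iff] at h1 h2
    have hp : projL n y ∈ δ ∩ (-δ) := by
      refine ⟨h1.1, ?_⟩
      rw [Set.mem_neg, ← map_neg]
      exact h2.1
    rw [hsc, Set.mem_singleton_iff] at hp
    have e1 : f (projL n y) ≤ lastL n y := h1.2
    have e2 : f (projL n (-y)) ≤ lastL n (-y) := h2.2
    rw [map_neg, map_neg, hp, neg_zero, hf0] at e2
    rw [hp, hf0] at e1
    have hl : lastL n y = 0 := le_antisymm (by linarith) e1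
    rw [← snoc_eta y, hp, hl, snoc_zero]
  · rintro rfl
    rw [neg_zero]
    exact ⟨zero_mem_upCone h0 hf0, zero_mem_upCone h0 hf0⟩

/-- Classification of the faces of a graph cone. -/
lemma faces_of_graph {σ : Set (V n)} {ℓ : Fin n → ℤ}
    (hfl : ∀ x ∈ σ, f x = pairR ℓ x) {ξ : Set (V (n+1))}
    (h : IsFaceOf ξ (graphMap f '' σ)) :
    ∃ τ, IsFaceOf τ σ ∧ ξ = graphMap f '' τ := by
  obtain ⟨L, hLpos, rfl⟩ := h
  set ℓ' := L ∘ₗ graphL ℓ with hℓ'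
  have hLg : ∀ x ∈ σ, L (graphMap f x) = ℓ' x := by
    intro x hx
    rw [graphMap_eq_graphL hfl hx, hℓ', LinearMap.comp_apply]
  refine ⟨σ ∩ {x | ℓ' x = 0}, ⟨ℓ', ?_, rfl⟩, ?_⟩
  · intro x hx
    rw [← hLg x hx]
    exact hLpos _ ⟨x, hx, rfl⟩
  · ext y
    simp only [Set.mem_inter_iff, Set.mem_setOf_eq]
    constructor
    · rintro ⟨h1, h2⟩
      obtain ⟨hp, hy⟩ := graph_rep h1
      refine ⟨projL n y, ⟨hp, ?_⟩, hy.symm⟩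
      show ℓ' (projL n y) = 0
      rw [← hLg _ hp, ← hy]
      exact h2
    · rintro ⟨x, ⟨hx, hℓx⟩, rfl⟩
      refine ⟨⟨x, hx, rfl⟩, ?_⟩
      rw [hLg x hx]
      exact hℓx

/-- Classification of the faces of an upper cone. -/
lemma faces_of_upCone {δ : Set (V n)} {ℓ : Fin n → ℤ}
    (hfl : ∀ x ∈ δ, f x = pairR ℓ x) (h0 : (0 : V n) ∈ δ) {ξ : Set (V (n+1))}
    (h : IsFaceOf ξ (upCone f δ)) :
    (∃ τ, IsFaceOf τ δ ∧ ξ = graphMap f '' τ) ∨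
    (∃ τ, IsFaceOf τ δ ∧ ξ = upCone f τ) := by
  obtain ⟨L, hLpos, rfl⟩ := h
  have hf0 : f 0 = 0 := f_zero hfl h0
  set ℓ' := L ∘ₗ graphL ℓ with hℓ'
  set c := L (eVecR n) with hc
  have hLg : ∀ x ∈ δ, ∀ t : ℝ, L (graphMap f x + t • eVecR n) = ℓ' x + t * c := by
    intro x hx t
    rw [map_add, map_smul, graphMap_eq_graphL hfl hx, hℓ', LinearMap.comp_apply,
      smul_eq_mul, hc]
  have hgmem : ∀ x ∈ δ, graphMap f x ∈ upCone f δ :=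
    fun x hx => ⟨x, hx, 0, le_refl 0, by rw [zero_smul, add_zero]⟩
  have hℓ'pos : ∀ x ∈ δ, 0 ≤ ℓ' x := by
    intro x hx
    have := hLpos _ (hgmem x hx)
    have h2 := hLg x hx 0
    rw [zero_smul, add_zero] at h2
    rw [h2] at this
    linarith
  have hcpos : 0 ≤ c := hLpos _ (eVec_mem_upCone h0 hf0)
  have hface : IsFaceOf (δ ∩ {x | ℓ' x = 0}) δ := ⟨ℓ', hℓ'pos, rfl⟩
  have hLy : ∀ y ∈ upCone f δ,
      L y = ℓ' (projL n y) + (lastL n y - f (projL n y)) * c := by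
    intro y hy
    obtain ⟨hp, ht, hrep⟩ := upCone_rep hy
    conv_lhs => rw [hrep]
    exact hLg _ hp _
  rcases eq_or_lt_of_le hcpos with hc0 | hcpos'
  · -- c = 0 : the face is an upper cone
    refine Or.inr ⟨δ ∩ {x | ℓ' x = 0}, hface, ?_⟩
    ext y
    simp only [Set.mem_inter_iff, Set.mem_setOf_eq]
    constructor
    · rintro ⟨h1, h2⟩
      rw [hLy y h1, ← hc0, mul_zero, add_zero] at h2
      obtain ⟨hp, ht, hrep⟩ := upCone_rep h1
      rw [mem_upCone_iff]
      rw [mem_upCone_iff] at h1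
      exact ⟨⟨hp, h2⟩, h1.2⟩
    · intro hy
      rw [mem_upCone_iff] at hy
      obtain ⟨⟨hp, hℓ0⟩, hle⟩ := hy
      have h1 : y ∈ upCone f δ := mem_upCone_iff.2 ⟨hp, hle⟩
      refine ⟨h1, ?_⟩
      rw [hLy y h1, hℓ0, ← hc0, mul_zero, add_zero]
  · -- c > 0 : the face is a graph
    refine Or.inl ⟨δ ∩ {x | ℓ' x = 0}, hface, ?_⟩
    ext y
    simp only [Set.mem_inter_iff, Set.mem_setOf_eq]
    constructor
    · rintro ⟨h1, h2⟩
      obtain ⟨hp, ht, hrep⟩ := upCone_rep h1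
      rw [hLy y h1] at h2
      have hℓ1 : 0 ≤ ℓ' (projL n y) := hℓ'pos _ hp
      have ht1 : 0 ≤ (lastL n y - f (projL n y)) * c := mul_nonneg ht (le_of_lt hcpos')
      have hz1 : ℓ' (projL n y) = 0 := by linarith
      have hz2 : lastL n y - f (projL n y) = 0 := by
        rcases eq_or_lt_of_le ht with h | h
        · linarith
        · exfalso
          have : 0 < (lastL n y - f (projL n y)) * c := mul_pos h hcpos'
          linarith
      rw [mem_graph_iff]
      exact ⟨⟨hp, hz1⟩, by linarith⟩
    · intro hy
      rw [mem_graph_iff] at hy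
      obtain ⟨⟨hp, hℓ0⟩, hlast⟩ := hy
      have h1 : y ∈ upCone f δ := mem_upCone_iff.2 ⟨hp, le_of_eq hlast.symm⟩
      refine ⟨h1, ?_⟩
      rw [hLy y h1, hℓ0, hlast]
      ring

/-- The tropical modification is a fan. -/
lemma tm_isFan (hFan : IsFan F) (hf : ConewiseLinear F f) (hΔF : Δ ⊆ F)
    (hΔface : ∀ δ ∈ Δ, ∀ δ', IsFaceOf δ' δ → δ' ∈ Δ) :
    IsFan (TMfan F f Δ) := by
  have hf0 : f 0 = 0 := f_zero_of_fan hFan hf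
  constructor
  · obtain ⟨σ, hσ⟩ := hFan.nonempty
    exact ⟨graphMap f '' σ, graph_mem_TM hσ⟩
  · -- rationality
    intro ξ hξ
    rcases mem_TM_iff.1 hξ with ⟨σ, hσ, rfl⟩ | ⟨δ, hδ, rfl⟩
    · obtain ⟨S, hS⟩ := isRationalCone_iff.1 (hFan.rat σ hσ)
      obtain ⟨ℓ, hℓ⟩ := hf σ hσ
      subst hS
      rw [isRationalCone_iff, graph_image_eq hℓ, graphL_image_coneOf]
      exact ⟨_, rfl⟩
    · have hδF := hΔF hδ
      obtain ⟨S, hS⟩ := isRationalCone_iff.1 (hFan.rat δ hδF)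
      obtain ⟨ℓ, hℓ⟩ := hf δ hδF
      subst hS
      rw [isRationalCone_iff, upCone_coneOf hℓ]
      exact ⟨_, rfl⟩
  · -- strong convexity
    intro ξ hξ
    rcases mem_TM_iff.1 hξ with ⟨σ, hσ, rfl⟩ | ⟨δ, hδ, rfl⟩
    · exact graph_stronglyConvex (hFan.convex σ hσ)
        (zero_mem_of_rational (hFan.rat σ hσ)) hf0
    · exact upCone_stronglyConvex (hFan.convex δ (hΔF hδ))
        (zero_mem_of_rational (hFan.rat δ (hΔF hδ))) hf0
  · -- faces
    intro ξ hξ ζ hζ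
    rcases mem_TM_iff.1 hξ with ⟨σ, hσ, rfl⟩ | ⟨δ, hδ, rfl⟩
    · obtain ⟨ℓ, hℓ⟩ := hf σ hσ
      obtain ⟨τ, hτσ, rfl⟩ := faces_of_graph hℓ hζ
      exact graph_mem_TM (hFan.faces_mem σ hσ τ hτσ)
    · obtain ⟨ℓ, hℓ⟩ := hf δ (hΔF hδ)
      rcases faces_of_upCone hℓ (zero_mem_of_rational (hFan.rat δ (hΔF hδ))) hζ with
        ⟨τ, hτδ, rfl⟩ | ⟨τ, hτδ, rfl⟩
      · exact graph_mem_TM (hFan.faces_mem δ (hΔF hδ) τ hτδ)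
      · exact upCone_mem_TM (hΔface δ hδ τ hτδ)
  · -- intersections are faces (left)
    intro ξ hξ ζ hζ
    rcases mem_TM_iff.1 hξ with ⟨σ, hσ, rfl⟩ | ⟨δ, hδ, rfl⟩ <;>
      rcases mem_TM_iff.1 hζ with ⟨σ', hσ', rfl⟩ | ⟨δ', hδ', rfl⟩
    · rw [graph_inter_graph]
      exact face_lift_graph (hFan.inter_face_left σ hσ σ' hσ')
    · rw [graph_inter_upCone]
      exact face_lift_graph (hFan.inter_face_left σ hσ δ' (hΔF hδ'))
    · rw [Set.inter_comm, graph_inter_upCone]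
      obtain ⟨ℓ, hℓ⟩ := hf δ (hΔF hδ)
      have : IsFaceOf (σ' ∩ δ) δ := hFan.inter_face_right σ' hσ' δ (hΔF hδ)
      exact graph_face_of_upCone hℓ this
    · rw [upCone_inter_upCone]
      exact face_lift_upCone (hFan.inter_face_left δ (hΔF hδ) δ' (hΔF hδ'))
  · -- intersections are faces (right)
    intro ξ hξ ζ hζ
    rcases mem_TM_iff.1 hξ with ⟨σ, hσ, rfl⟩ | ⟨δ, hδ, rfl⟩ <;>
      rcases mem_TM_iff.1 hζ with ⟨σ', hσ', rfl⟩ | ⟨δ', hδ', rfl⟩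
    · rw [graph_inter_graph]
      exact face_lift_graph (hFan.inter_face_right σ hσ σ' hσ')
    · rw [graph_inter_upCone]
      obtain ⟨ℓ, hℓ⟩ := hf δ' (hΔF hδ')
      have : IsFaceOf (σ ∩ δ') δ' := hFan.inter_face_right σ hσ δ' (hΔF hδ')
      exact graph_face_of_upCone hℓ this
    · rw [Set.inter_comm, graph_inter_upCone]
      exact face_lift_graph (hFan.inter_face_left σ' hσ' δ (hΔF hδ))
    · rw [upCone_inter_upCone]
      exact face_lift_upCone (hFan.inter_face_right δ (hΔF hδ) δ' (hΔF hδ'))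

end TM2

/-! ### Rays of the tropical modification -/

section TM3
variable {n : ℕ} {F : Finset (Set (V n))} {f : V n → ℝ} {Δ : Finset (Set (V n))}

lemma hfl_zero (hf0 : f 0 = 0) : ∀ x ∈ ({0} : Set (V n)), f x = pairR 0 x := by
  rintro x rfl
  rw [hf0, ← pairL_apply, map_zero]

lemma specialRay_eq_upCone (hf0 : f 0 = 0) : specialRay n = upCone f {(0 : V n)} :=
  (upCone_zero hf0).symm

lemma dimC_specialRay (hf0 : f 0 = 0) : dimC (specialRay n) = 1 := by
  rw [specialRay_eq_upCone (f := f) hf0, dimC_upCone (hfl_zero hf0) rfl,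
    dimC_singleton_zero]

lemma specialRay_mem_TM (hf0 : f 0 = 0) (hΔ0 : ({0} : Set (V n)) ∈ Δ) :
    specialRay n ∈ TMfan F f Δ := by
  rw [specialRay_eq_upCone (f := f) hf0]
  exact upCone_mem_TM hΔ0

lemma graph_ne_specialRay {ρ : Set (V n)} (hf0 : f 0 = 0) :
    graphMap f '' ρ ≠ specialRay n := by
  rw [specialRay_eq_upCone (f := f) hf0]
  exact graph_ne_upCone rfl hf0

/-- Classification of the rays of the tropical modification. -/
lemma mem_raysF_TM_iff (hFan : IsFan F) (hf : ConewiseLinear F f) (hΔF : Δ ⊆ F)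
    (hΔ0 : ({0} : Set (V n)) ∈ Δ) {ξ : Set (V (n+1))} :
    ξ ∈ raysF (TMfan F f Δ) ↔
      (∃ ρ ∈ raysF F, ξ = graphMap f '' ρ) ∨ ξ = specialRay n := by
  have hf0 : f 0 = 0 := f_zero_of_fan hFan hf
  rw [raysF, Finset.mem_filter]
  constructor
  · rintro ⟨hmem, hdim⟩
    rcases mem_TM_iff.1 hmem with ⟨σ, hσ, rfl⟩ | ⟨δ, hδ, rfl⟩
    · obtain ⟨ℓ, hℓ⟩ := hf σ hσ
      rw [dimC_graph hℓ] at hdim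
      exact Or.inl ⟨σ, Finset.mem_filter.2 ⟨hσ, hdim⟩, rfl⟩
    · obtain ⟨ℓ, hℓ⟩ := hf δ (hΔF hδ)
      have h0δ : (0 : V n) ∈ δ := zero_mem_of_rational (hFan.rat δ (hΔF hδ))
      rw [dimC_upCone hℓ h0δ] at hdim
      have hδ0 : δ = {0} :=
        eq_singleton_zero_of_dimC_eq_zero h0δ (by omega)
      rw [hδ0, ← specialRay_eq_upCone hf0]
      exact Or.inr rfl
  · rintro (⟨ρ, hρ, rfl⟩ | rfl)
    · obtain ⟨hρF, hρ1⟩ := Finset.mem_filter.1 hρ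
      obtain ⟨ℓ, hℓ⟩ := hf ρ hρF
      exact ⟨graph_mem_TM hρF, by rw [dimC_graph hℓ]; exact hρ1⟩
    · exact ⟨specialRay_mem_TM hf0 hΔ0, dimC_specialRay hf0⟩

/-! ### Primitive generators -/

lemma primGen_graph {ρ : Set (V n)} {ℓ : Fin n → ℤ}
    (hfl : ∀ x ∈ ρ, f x = pairR ℓ x) {v : Fin n → ℤ}
    (hprim : IsPrimitiveGen ρ v) :
    IsPrimitiveGen (graphMap f '' ρ) (Fin.snoc v (pairZ ℓ v)) := by
  obtain ⟨hv0, hvρ, hvgen⟩ := hprim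
  refine ⟨?_, ?_, ?_⟩
  · intro h
    apply hv0
    funext i
    have := congrFun h i.castSucc
    simpa using this
  · rw [← graphL_intVec, ← graphMap_eq_graphL hfl hvρ]
    exact ⟨intVec v, hvρ, rfl⟩
  · intro w hw
    rw [memLat, span_graph hfl] at hw
    obtain ⟨z, hz, hze⟩ := hw
    set w₀ : Fin n → ℤ := fun i => w i.castSucc with hw₀
    have hzw : z = intVec w₀ := by
      have := congrArg (projL n) hze
      rw [projL_graphL] at this
      rw [this]
      funext i
      simp [projL_apply, intVec, hw₀]
    have hmem : memLat ρ w₀ := by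
      rw [memLat, ← hzw]
      exact hz
    obtain ⟨k, hk⟩ := hvgen w₀ hmem
    refine ⟨k, ?_⟩
    apply intVec_injective
    rw [← hze, hzw, hk, intVec_smul, map_smul, graphL_intVec, intVec_smul]

lemma span_specialRay :
    Submodule.span ℝ (specialRay n) = Submodule.span ℝ {eVecR n} := by
  apply le_antisymm
  · rw [Submodule.span_le]
    rintro y ⟨t, ht, rfl⟩
    exact Submodule.smul_mem _ t (Submodule.subset_span rfl)
  · rw [Submodule.span_le, Set.singleton_subset_iff]
    exact Submodule.subset_span ⟨1, zero_le_one, (one_smul ℝ _).symm⟩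

lemma primGen_special : IsPrimitiveGen (specialRay n) (Fin.snoc (0 : Fin n → ℤ) 1) := by
  refine ⟨?_, ?_, ?_⟩
  · intro h
    have := congrFun h (Fin.last n)
    simp only [Fin.snoc_last] at this
    exact one_ne_zero this
  · rw [intVec_snocZ01]
    exact ⟨1, zero_le_one, (one_smul ℝ _).symm⟩
  · intro w hw
    rw [memLat, span_specialRay, Submodule.mem_span_singleton] at hw
    obtain ⟨c, hc⟩ := hw
    have hcw : c = (w (Fin.last n) : ℝ) := by
      have := congrFun hc (Fin.last n)
      simp only [intVec] at this
      rw [← this]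
      have : eVecR n (Fin.last n) = 1 := by rw [eVecR, Fin.snoc_last]
      simp [this]
    refine ⟨w (Fin.last n), ?_⟩
    funext i
    refine Fin.lastCases ?_ (fun j => ?_) i
    · simp
    · have h1 := congrFun hc j.castSucc
      have h2 : eVecR n j.castSucc = 0 := by
        rw [eVecR, Fin.snoc_castSucc]; rfl
      simp only [Pi.smul_apply, h2, smul_eq_mul, mul_zero] at h1
      have hwj : w j.castSucc = 0 := by
        have h3 : (w j.castSucc : ℝ) = 0 := h1.symm
        exact_mod_cast h3
      simp [hwj]

lemma primGen_unique {m : ℕ} {r : Set (V m)} (hsc : StronglyConvex r)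
    {v w : Fin m → ℤ} (h1 : IsPrimitiveGen r v) (h2 : IsPrimitiveGen r w) : v = w := by
  have hwlat : memLat r w := Submodule.subset_span h2.2.1
  have hvlat : memLat r v := Submodule.subset_span h1.2.1
  obtain ⟨k, hk⟩ := h1.2.2 w hwlat
  obtain ⟨k', hk'⟩ := h2.2.2 v hvlat
  have hvv : v = (k' * k) • v := by
    rw [mul_smul, ← hk, ← hk']
  have hkk : k' * k = 1 := by
    by_contra hne
    apply h1.1
    have : (1 - k' * k) • v = 0 := by
      have := hvv
      rw [sub_smul, one_smul]
      rw [← this]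
      simp
    funext i
    have hi := congrFun this i
    simp only [Pi.smul_apply, smul_eq_mul, Pi.zero_apply] at hi
    rcases mul_eq_zero.1 hi with h | h
    · exfalso; apply hne; omega
    · exact h
  have hk1 : k = 1 ∨ k = -1 :=
    Int.isUnit_iff.1 (IsUnit.of_mul_eq_one k' (by rw [mul_comm]; exact hkk))
  rcases hk1 with rfl | rfl
  · rw [hk, one_smul]
  · exfalso
    have hwr := h2.2.1
    rw [hk, neg_one_smul, intVec_neg] at hwr
    have hvin : intVec v ∈ r ∩ (-r) := ⟨h1.2.1, by rwa [Set.mem_neg]⟩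
    rw [hsc, Set.mem_singleton_iff] at hvin
    apply h1.1
    apply intVec_injective
    rw [hvin, intVec_zero]

end TM3

/-! ### Simpliciality of the tropical modification -/

section TM4
variable {n : ℕ} {F : Finset (Set (V n))} {f : V n → ℝ} {Δ : Finset (Set (V n))}

lemma proj_image_graph {ρ : Set (V n)} : projL n '' (graphMap f '' ρ) = ρ := by
  ext x
  constructor
  · rintro ⟨y, ⟨x', hx', rfl⟩, rfl⟩
    rwa [projL_graphMap]
  · intro hx
    exact ⟨graphMap f x, ⟨x, hx, rfl⟩, projL_graphMap f x⟩

lemma specialRay_not_mem_graph_image (hf0 : f 0 = 0) {s : Finset (Set (V n))} :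
    specialRay n ∉ s.image (fun ρ => graphMap f '' ρ) := by
  rw [Finset.mem_image]
  rintro ⟨ρ, _, h⟩
  exact graph_ne_specialRay hf0 h

lemma raysOfCone_graph (hFan : IsFan F) (hf : ConewiseLinear F f) (hΔF : Δ ⊆ F)
    (hΔ0 : ({0} : Set (V n)) ∈ Δ) {σ : Set (V n)} (hσ : σ ∈ F) :
    raysOfCone (TMfan F f Δ) (graphMap f '' σ)
      = (raysOfCone F σ).image (fun ρ => graphMap f '' ρ) := by
  have hf0 : f 0 = 0 := f_zero_of_fan hFan hf
  ext r
  rw [raysOfCone, Finset.mem_filter, Finset.mem_image]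
  constructor
  · rintro ⟨hray, hsub⟩
    rcases (mem_raysF_TM_iff hFan hf hΔF hΔ0).1 hray with ⟨ρ, hρ, rfl⟩ | rfl
    · exact ⟨ρ, Finset.mem_filter.2 ⟨hρ, graph_subset_graph_iff.1 hsub⟩, rfl⟩
    · exfalso
      rw [specialRay_eq_upCone (f := f) hf0] at hsub
      exact upCone_subset_graph_iff (δ := ({0} : Set (V n))) rfl hf0 hsub
  · rintro ⟨ρ, hρ, rfl⟩
    obtain ⟨hρray, hρsub⟩ := Finset.mem_filter.1 hρ
    exact ⟨(mem_raysF_TM_iff hFan hf hΔF hΔ0).2 (Or.inl ⟨ρ, hρray, rfl⟩),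
      Set.image_mono hρsub⟩

lemma raysOfCone_upCone (hFan : IsFan F) (hf : ConewiseLinear F f) (hΔF : Δ ⊆ F)
    (hΔ0 : ({0} : Set (V n)) ∈ Δ) {δ : Set (V n)} (hδ : δ ∈ Δ) :
    raysOfCone (TMfan F f Δ) (upCone f δ)
      = insert (specialRay n) ((raysOfCone F δ).image (fun ρ => graphMap f '' ρ)) := by
  have hf0 : f 0 = 0 := f_zero_of_fan hFan hf
  have h0δ : (0 : V n) ∈ δ := zero_mem_of_rational (hFan.rat δ (hΔF hδ))
  ext r
  rw [raysOfCone, Finset.mem_filter, Finset.mem_insert, Finset.mem_image]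
  constructor
  · rintro ⟨hray, hsub⟩
    rcases (mem_raysF_TM_iff hFan hf hΔF hΔ0).1 hray with ⟨ρ, hρ, rfl⟩ | rfl
    · exact Or.inr ⟨ρ, Finset.mem_filter.2 ⟨hρ, graph_subset_upCone_iff.1 hsub⟩, rfl⟩
    · exact Or.inl rfl
  · rintro (rfl | ⟨ρ, hρ, rfl⟩)
    · refine ⟨(mem_raysF_TM_iff hFan hf hΔF hΔ0).2 (Or.inr rfl), ?_⟩
      rw [specialRay_eq_upCone (f := f) hf0]
      exact upCone_subset_upCone (Set.singleton_subset_iff.2 h0δ)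
    · obtain ⟨hρray, hρsub⟩ := Finset.mem_filter.1 hρ
      exact ⟨(mem_raysF_TM_iff hFan hf hΔF hΔ0).2 (Or.inl ⟨ρ, hρray, rfl⟩),
        graph_subset_upCone hρsub⟩

/-- The tropical modification of a simplicial fan is simplicial. -/
lemma tm_isSimplicial (hFan : IsFan F) (hf : ConewiseLinear F f) (hΔF : Δ ⊆ F)
    (hΔ0 : ({0} : Set (V n)) ∈ Δ) (hs : IsSimplicial F) :
    IsSimplicial (TMfan F f Δ) := by
  have hf0 : f 0 = 0 := f_zero_of_fan hFan hf
  intro ξ hξ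
  rcases mem_TM_iff.1 hξ with ⟨σ, hσ, rfl⟩ | ⟨δ, hδ, rfl⟩
  · obtain ⟨ℓ, hℓ⟩ := hf σ hσ
    obtain ⟨hcard, hgen⟩ := hs σ hσ
    have hray := raysOfCone_graph hFan hf hΔF hΔ0 hσ
    constructor
    · rw [hray, Finset.card_image_of_injOn (fun a _ b _ h => graph_image_injective h),
        hcard, dimC_graph hℓ]
    · ext y
      constructor
      · rintro ⟨x, hx, rfl⟩
        obtain ⟨yv, hyv, hsum⟩ : ∃ yv : Set (V n) → V n, (∀ ρ ∈ raysOfCone F σ, yv ρ ∈ ρ) ∧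
            x = ∑ ρ ∈ raysOfCone F σ, yv ρ := by
          have hx' := hx
          rw [hgen] at hx'
          exact hx'
        refine ⟨fun r => graphMap f (yv (projL n '' r)), ?_, ?_⟩
        · intro r hr
          rw [hray, Finset.mem_image] at hr
          obtain ⟨ρ, hρ, rfl⟩ := hr
          dsimp only
          rw [proj_image_graph]
          exact ⟨yv ρ, hyv ρ hρ, rfl⟩
        · rw [hray, Finset.sum_image (fun a _ b _ h => graph_image_injective h)]
          have hstep : ∀ ρ ∈ raysOfCone F σ,
              graphMap f (yv (projL n '' (graphMap f '' ρ))) = graphL ℓ (yv ρ) := by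
            intro ρ hρ
            rw [proj_image_graph]
            exact graphMap_eq_graphL hℓ ((Finset.mem_filter.1 hρ).2 (hyv ρ hρ))
          rw [Finset.sum_congr rfl hstep, ← map_sum, ← hsum,
            ← graphMap_eq_graphL hℓ hx]
      · rintro ⟨yt, hyt, rfl⟩
        have hmem : ∀ ρ ∈ raysOfCone F σ, projL n (yt (graphMap f '' ρ)) ∈ ρ ∧
            yt (graphMap f '' ρ) = graphMap f (projL n (yt (graphMap f '' ρ))) := by
          intro ρ hρ
          apply graph_rep
          apply hyt
          rw [hray]
          exact Finset.mem_image_of_mem _ hρ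
        have hxσ : (∑ ρ ∈ raysOfCone F σ, projL n (yt (graphMap f '' ρ))) ∈ σ := by
          have hB : ∀ z : V n, (∃ yv : Set (V n) → V n, (∀ ρ ∈ raysOfCone F σ, yv ρ ∈ ρ) ∧
              z = ∑ ρ ∈ raysOfCone F σ, yv ρ) → z ∈ σ := by
            intro z hz
            rw [hgen]
            exact hz
          exact hB _ ⟨fun ρ => projL n (yt (graphMap f '' ρ)), fun ρ hρ => (hmem ρ hρ).1, rfl⟩
        refine ⟨∑ ρ ∈ raysOfCone F σ, projL n (yt (graphMap f '' ρ)), hxσ, ?_⟩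
        rw [graphMap_eq_graphL hℓ hxσ, map_sum, hray,
          Finset.sum_image (fun a _ b _ h => graph_image_injective h)]
        refine Finset.sum_congr rfl fun ρ hρ => ?_
        have h2 := (hmem ρ hρ).2
        rw [graphMap_eq_graphL hℓ ((Finset.mem_filter.1 hρ).2 (hmem ρ hρ).1)] at h2
        exact h2.symm
  · have hδF := hΔF hδ
    obtain ⟨ℓ, hℓ⟩ := hf δ hδF
    obtain ⟨hcard, hgen⟩ := hs δ hδF
    have h0δ : (0 : V n) ∈ δ := zero_mem_of_rational (hFan.rat δ hδF)
    have hray := raysOfCone_upCone hFan hf hΔF hΔ0 hδ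
    have hnotmem : specialRay n ∉ (raysOfCone F δ).image (fun ρ => graphMap f '' ρ) :=
      specialRay_not_mem_graph_image hf0
    constructor
    · rw [hray, Finset.card_insert_of_notMem hnotmem,
        Finset.card_image_of_injOn (fun a _ b _ h => graph_image_injective h),
        hcard, dimC_upCone hℓ h0δ]
    · ext y
      constructor
      · intro hy
        obtain ⟨hp, ht, hrep⟩ := upCone_rep hy
        obtain ⟨yv, hyv, hsum⟩ : ∃ yv : Set (V n) → V n, (∀ ρ ∈ raysOfCone F δ, yv ρ ∈ ρ) ∧
            projL n y = ∑ ρ ∈ raysOfCone F δ, yv ρ := by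
          have hp' := hp
          rw [hgen] at hp'
          exact hp'
        refine ⟨fun r => if r = specialRay n then (lastL n y - f (projL n y)) • eVecR n
          else graphMap f (yv (projL n '' r)), ?_, ?_⟩
        · intro r hr
          rw [hray, Finset.mem_insert] at hr
          rcases hr with rfl | hr
          · dsimp only
            rw [if_pos rfl]
            exact ⟨lastL n y - f (projL n y), ht, rfl⟩
          · obtain ⟨ρ, hρ, rfl⟩ := Finset.mem_image.1 hr
            dsimp only
            rw [if_neg (graph_ne_specialRay hf0), proj_image_graph]
            exact ⟨yv ρ, hyv ρ hρ, rfl⟩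
        · rw [hray, Finset.sum_insert hnotmem, if_pos rfl,
            Finset.sum_image (fun a _ b _ h => graph_image_injective h)]
          have hstep : ∀ ρ ∈ raysOfCone F δ,
              (if graphMap f '' ρ = specialRay n then (lastL n y - f (projL n y)) • eVecR n
               else graphMap f (yv (projL n '' (graphMap f '' ρ)))) = graphL ℓ (yv ρ) := by
            intro ρ hρ
            rw [if_neg (graph_ne_specialRay hf0), proj_image_graph]
            exact graphMap_eq_graphL hℓ ((Finset.mem_filter.1 hρ).2 (hyv ρ hρ))
          rw [Finset.sum_congr rfl hstep, ← map_sum, ← hsum, ← graphMap_eq_graphL hℓ hp]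
          conv_lhs => rw [hrep]
          exact add_comm _ _
      · rintro ⟨yt, hyt, rfl⟩
        have hsp : yt (specialRay n) ∈ specialRay n := by
          apply hyt
          rw [hray]
          exact Finset.mem_insert_self _ _
        obtain ⟨t, ht, hts⟩ := hsp
        have hmem : ∀ ρ ∈ raysOfCone F δ, projL n (yt (graphMap f '' ρ)) ∈ ρ ∧
            yt (graphMap f '' ρ) = graphMap f (projL n (yt (graphMap f '' ρ))) := by
          intro ρ hρ
          apply graph_rep
          apply hyt
          rw [hray]
          exact Finset.mem_insert_of_mem (Finset.mem_image_of_mem _ hρ)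
        have hxδ : (∑ ρ ∈ raysOfCone F δ, projL n (yt (graphMap f '' ρ))) ∈ δ := by
          have hB : ∀ z : V n, (∃ yv : Set (V n) → V n, (∀ ρ ∈ raysOfCone F δ, yv ρ ∈ ρ) ∧
              z = ∑ ρ ∈ raysOfCone F δ, yv ρ) → z ∈ δ := by
            intro z hz
            rw [hgen]
            exact hz
          exact hB _ ⟨fun ρ => projL n (yt (graphMap f '' ρ)), fun ρ hρ => (hmem ρ hρ).1, rfl⟩
        refine ⟨∑ ρ ∈ raysOfCone F δ, projL n (yt (graphMap f '' ρ)), hxδ, t, ht, ?_⟩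
        rw [hray, Finset.sum_insert hnotmem, hts,
          Finset.sum_image (fun a _ b _ h => graph_image_injective h)]
        have hstep : ∀ ρ ∈ raysOfCone F δ,
            yt (graphMap f '' ρ) = graphL ℓ (projL n (yt (graphMap f '' ρ))) := by
          intro ρ hρ
          have h2 := (hmem ρ hρ).2
          rw [graphMap_eq_graphL hℓ ((Finset.mem_filter.1 hρ).2 (hmem ρ hρ).1)] at h2
          exact h2
        rw [Finset.sum_congr rfl hstep, ← map_sum, ← graphMap_eq_graphL hℓ hxδ]
        exact add_comm _ _

end TM4

/-! ### The Chow ring surjection -/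

section Chow
variable {n : ℕ} {F : Finset (Set (V n))} {f : V n → ℝ} {Δ : Finset (Set (V n))}

lemma pairZ_zero_left {m : ℕ} (v : Fin m → ℤ) : pairZ 0 v = 0 := by simp [pairZ]

lemma pairZ_zero_right {m : ℕ} (ℓ : Fin m → ℤ) : pairZ ℓ 0 = 0 := by simp [pairZ]

lemma pairZ_snoc (a : Fin n → ℤ) (b : ℤ) (v : Fin n → ℤ) (m : ℤ) :
    pairZ (Fin.snoc a b) (Fin.snoc v m) = pairZ a v + b * m := by
  rw [pairZ, Fin.sum_univ_castSucc]
  simp [pairZ]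

set_option maxHeartbeats 1000000 in
set_option synthInstance.maxHeartbeats 200000 in
lemma chow_surjective (hFan : IsFan F) (hf : ConewiseLinear F f)
    (hΔF : Δ ⊆ F) (hΔ0 : ({0} : Set (V n)) ∈ Δ)
    (hΔface : ∀ δ ∈ Δ, ∀ δ', IsFaceOf δ' δ → δ' ∈ Δ)
    (e : Set (V n) → Fin n → ℤ) (he : ∀ ρ ∈ raysF F, IsPrimitiveGen ρ (e ρ))
    (et : Set (V (n+1)) → Fin (n+1) → ℤ)
    (het : ∀ r ∈ raysF (TMfan F f Δ), IsPrimitiveGen r (et r)) :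
    ∃ ψ : ChowRing F e →+* ChowRing (TMfan F f Δ) et,
      Function.Surjective ψ ∧
      ∀ (ρ : RayT F) (r : RayT (TMfan F f Δ)), r.1 = graphMap f '' ρ.1 →
        ψ (Ideal.Quotient.mk (chowIdeal F e) (X ρ))
          = Ideal.Quotient.mk (chowIdeal (TMfan F f Δ) et) (X r) := by
  classical
  have hf0 : f 0 = 0 := f_zero_of_fan hFan hf
  have hmemι : ∀ ρ : RayT F, (graphMap f '' ρ.1) ∈ raysF (TMfan F f Δ) := fun ρ =>
    (mem_raysF_TM_iff hFan hf hΔF hΔ0).2 (Or.inl ⟨ρ.1, ρ.2, rfl⟩)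
  set ι : RayT F → RayT (TMfan F f Δ) := fun ρ => ⟨graphMap f '' ρ.1, hmemι ρ⟩ with hι
  have hιinj : Function.Injective ι := by
    intro a b h
    exact Subtype.ext (graph_image_injective (congrArg Subtype.val h))
  have hsp : specialRay n ∈ raysF (TMfan F f Δ) :=
    (mem_raysF_TM_iff hFan hf hΔF hΔ0).2 (Or.inr rfl)
  set r₀ : RayT (TMfan F f Δ) := ⟨specialRay n, hsp⟩ with hr₀
  have hclass : ∀ r : RayT (TMfan F f Δ), (∃ ρ : RayT F, r = ι ρ) ∨ r = r₀ := by
    intro r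
    rcases (mem_raysF_TM_iff hFan hf hΔF hΔ0).1 r.2 with ⟨ρ, hρ, hre⟩ | hre
    · exact Or.inl ⟨⟨ρ, hρ⟩, Subtype.ext hre⟩
    · exact Or.inr (Subtype.ext hre)
  have hr0ι : ∀ ρ : RayT F, ι ρ ≠ r₀ := by
    intro ρ h
    exact graph_ne_specialRay hf0 (congrArg Subtype.val h)
  have hr0notmem : r₀ ∉ Finset.univ.image ι := by
    rw [Finset.mem_image]
    rintro ⟨ρ, _, h⟩
    exact hr0ι ρ h
  have huniv : (Finset.univ : Finset (RayT (TMfan F f Δ)))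
      = insert r₀ (Finset.univ.image ι) := by
    ext r
    simp only [Finset.mem_univ, true_iff, Finset.mem_insert, Finset.mem_image, true_and]
    rcases hclass r with ⟨ρ, rfl⟩ | rfl
    · exact Or.inr ⟨ρ, rfl⟩
    · exact Or.inl rfl
  -- primitive generators of the rays of the modification
  have hρF : ∀ ρ : RayT F, ρ.1 ∈ F := fun ρ => (Finset.mem_filter.1 ρ.2).1
  choose ℓh hℓh using fun ρ : RayT F => hf ρ.1 (hρF ρ)
  have hTMisFan : IsFan (TMfan F f Δ) := tm_isFan hFan hf hΔF hΔface
  have hscTM : ∀ r : RayT (TMfan F f Δ), StronglyConvex r.1 := fun r =>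
    hTMisFan.convex r.1 (Finset.mem_filter.1 r.2).1
  have hprimg : ∀ ρ : RayT F,
      IsPrimitiveGen (ι ρ).1 (Fin.snoc (e ρ.1) (pairZ (ℓh ρ) (e ρ.1))) := fun ρ =>
    primGen_graph (hℓh ρ) (he ρ.1 ρ.2)
  have hetι : ∀ ρ : RayT F, et (ι ρ).1 = Fin.snoc (e ρ.1) (pairZ (ℓh ρ) (e ρ.1)) :=
    fun ρ => primGen_unique (hscTM (ι ρ)) (het _ (ι ρ).2) (hprimg ρ)
  have hetr0 : et (specialRay n) = Fin.snoc (0 : Fin n → ℤ) 1 :=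
    primGen_unique (hscTM r₀) (het _ hsp) primGen_special
  -- the polynomial ring map
  set φ : MvPolynomial (RayT F) ℤ →+* MvPolynomial (RayT (TMfan F f Δ)) ℤ :=
    (rename ι : MvPolynomial (RayT F) ℤ →ₐ[ℤ] MvPolynomial (RayT (TMfan F f Δ)) ℤ).toRingHom
    with hφdef
  have hφX : ∀ ρ : RayT F, φ (X ρ) = X (ι ρ) := fun ρ => rename_X ι ρ
  have hφC : ∀ a : ℤ, φ (C a) = C a := fun a => rename_C ι a
  -- sums over all rays of the modification
  have hsum_univ : ∀ g : RayT (TMfan F f Δ) → MvPolynomial (RayT (TMfan F f Δ)) ℤ,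
      ∑ r, g r = g r₀ + ∑ ρ : RayT F, g (ι ρ) := by
    intro g
    rw [show (Finset.univ : Finset (RayT (TMfan F f Δ)))
        = insert r₀ (Finset.univ.image ι) from huniv,
      Finset.sum_insert hr0notmem, Finset.sum_image (fun a _ b _ h => hιinj h)]
  -- non-cones map to non-cones
  have hII : ∀ S : Finset (RayT F), ¬ FormsCone F S →
      ¬ FormsCone (TMfan F f Δ) (S.image ι) := by
    intro S hS hcon
    obtain ⟨ξ, hξ, hiff⟩ := hcon
    rcases mem_TM_iff.1 hξ with ⟨σ, hσ, rfl⟩ | ⟨δ, hδ, rfl⟩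
    · apply hS
      refine ⟨σ, hσ, fun ρ => ?_⟩
      constructor
      · intro hρS
        have h2 := (hiff (ι ρ)).1 (Finset.mem_image_of_mem ι hρS)
        exact graph_subset_graph_iff.1 h2
      · intro hsub
        have h2 := (hiff (ι ρ)).2 (Set.image_mono hsub)
        obtain ⟨ρ', hρ', hee⟩ := Finset.mem_image.1 h2
        rwa [← hιinj hee]
    · have h0δ : (0 : V n) ∈ δ := zero_mem_of_rational (hFan.rat δ (hΔF hδ))
      have h1 : r₀ ∈ S.image ι := by
        apply (hiff r₀).2
        show specialRay n ⊆ upCone f δ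
        rw [specialRay_eq_upCone (f := f) hf0]
        exact upCone_subset_upCone (Set.singleton_subset_iff.2 h0δ)
      obtain ⟨ρ, _, hee⟩ := Finset.mem_image.1 h1
      exact hr0ι ρ hee
  -- φ maps the ideal into the ideal
  have hle : chowIdeal F e ≤ Ideal.comap φ (chowIdeal (TMfan F f Δ) et) := by
    rw [chowIdeal]
    apply sup_le
    · rw [idealI, Ideal.span_le]
      rintro p ⟨S, hS, rfl⟩
      show φ (∏ ρ ∈ S, X ρ) ∈ chowIdeal (TMfan F f Δ) et
      have hprod : φ (∏ ρ ∈ S, X ρ) = ∏ r ∈ S.image ι, X r := by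
        rw [map_prod, Finset.prod_image (fun a _ b _ h => hιinj h)]
        exact Finset.prod_congr rfl fun ρ _ => hφX ρ
      rw [hprod]
      apply Ideal.mem_sup_left
      exact Ideal.subset_span ⟨S.image ι, hII S hS, rfl⟩
    · rw [idealJ, Ideal.span_le]
      rintro p ⟨ℓ, rfl⟩
      show φ (xLin F e ℓ) ∈ chowIdeal (TMfan F f Δ) et
      have hxlin : φ (xLin F e ℓ)
          = xLin (TMfan F f Δ) et (Fin.snoc ℓ 0) := by
        rw [xLin, xLin, map_sum, hsum_univ]
        have h1 : C (pairZ (Fin.snoc ℓ 0) (et r₀.1)) * X r₀ = 0 := by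
          rw [show r₀.1 = specialRay n from rfl, hetr0, pairZ_snoc, pairZ_zero_right]
          norm_num
        rw [h1, zero_add]
        refine Finset.sum_congr rfl fun ρ _ => ?_
        rw [map_mul, hφX, hφC, hetι, pairZ_snoc]
        norm_num
      rw [hxlin]
      apply Ideal.mem_sup_right
      exact Ideal.subset_span ⟨Fin.snoc ℓ 0, rfl⟩
  set ψ : ChowRing F e →+* ChowRing (TMfan F f Δ) et :=
    Ideal.quotientMap (chowIdeal (TMfan F f Δ) et) φ hle with hψ
  have hψmk : ∀ P, ψ (Ideal.Quotient.mk (chowIdeal F e) P)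
      = Ideal.Quotient.mk (chowIdeal (TMfan F f Δ) et) (φ P) := by
    intro P
    rw [hψ, Ideal.quotientMap_mk]
  -- the special ray class is in the image
  have hXr0 : ∃ w, ψ w = Ideal.Quotient.mk (chowIdeal (TMfan F f Δ) et) (X r₀) := by
    refine ⟨Ideal.Quotient.mk (chowIdeal F e)
      (- ∑ ρ : RayT F, C (pairZ (ℓh ρ) (e ρ.1)) * X ρ), ?_⟩
    rw [hψmk]
    rw [Ideal.Quotient.eq]
    have hlin : xLin (TMfan F f Δ) et (Fin.snoc (0 : Fin n → ℤ) 1)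
        = X r₀ + ∑ ρ : RayT F, C (pairZ (ℓh ρ) (e ρ.1)) * X (ι ρ) := by
      rw [xLin, hsum_univ]
      have h1 : C (pairZ (Fin.snoc (0 : Fin n → ℤ) 1) (et r₀.1)) * X r₀ = X r₀ := by
        rw [show r₀.1 = specialRay n from rfl, hetr0, pairZ_snoc, pairZ_zero_left]
        norm_num
      rw [h1]
      congr 1
      refine Finset.sum_congr rfl fun ρ _ => ?_
      rw [hetι, pairZ_snoc, pairZ_zero_left]
      norm_num
    have hmem : xLin (TMfan F f Δ) et (Fin.snoc (0 : Fin n → ℤ) 1)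
        ∈ chowIdeal (TMfan F f Δ) et := by
      apply Ideal.mem_sup_right
      exact Ideal.subset_span ⟨Fin.snoc (0 : Fin n → ℤ) 1, rfl⟩
    have heq : φ (- ∑ ρ : RayT F, C (pairZ (ℓh ρ) (e ρ.1)) * X ρ) - X r₀
        = - xLin (TMfan F f Δ) et (Fin.snoc (0 : Fin n → ℤ) 1) := by
      rw [hlin, map_neg, map_sum]
      have h2 : ∀ ρ : RayT F, φ (C (pairZ (ℓh ρ) (e ρ.1)) * X ρ)
          = C (pairZ (ℓh ρ) (e ρ.1)) * X (ι ρ) := by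
        intro ρ
        rw [map_mul, hφX, hφC]
      rw [Finset.sum_congr rfl fun ρ _ => h2 ρ]
      ring
    rw [heq]
    exact neg_mem hmem
  -- every ray class is in the image
  have hXr : ∀ r : RayT (TMfan F f Δ),
      ∃ w, ψ w = Ideal.Quotient.mk (chowIdeal (TMfan F f Δ) et) (X r) := by
    intro r
    rcases hclass r with ⟨ρ, rfl⟩ | rfl
    · exact ⟨Ideal.Quotient.mk (chowIdeal F e) (X ρ), by rw [hψmk, hφX]⟩
    · exact hXr0
  have hsurj : Function.Surjective ψ := by
    intro z
    obtain ⟨P, rfl⟩ := Ideal.Quotient.mk_surjective z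
    induction P using MvPolynomial.induction_on with
    | C a =>
      exact ⟨Ideal.Quotient.mk (chowIdeal F e) (C a), by rw [hψmk, hφC]⟩
    | add p q hp hq =>
      obtain ⟨u, hu⟩ := hp
      obtain ⟨v, hv⟩ := hq
      exact ⟨u + v, by rw [map_add, hu, hv, map_add]⟩
    | mul_X p r hp =>
      obtain ⟨u, hu⟩ := hp
      obtain ⟨w, hw⟩ := hXr r
      exact ⟨u * w, by rw [map_mul, hu, hw, map_mul]⟩
  refine ⟨ψ, hsurj, ?_⟩
  intro ρ r hr
  have : r = ι ρ := Subtype.ext hr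
  rw [this, hψmk, hφX]

end Chow

/-! ### Properties of the divisor -/

section Div
variable {n d : ℕ} {F : Finset (Set (V n))} {f : V n → ℝ} {o : Set (V n) → ℤ}

lemma divFaces_subset : divFaces F d o ⊆ F := Finset.filter_subset _ _

lemma divFaces_face_closed (hFan : IsFan F) :
    ∀ δ ∈ divFaces F d o, ∀ δ', IsFaceOf δ' δ → δ' ∈ divFaces F d o := by
  intro δ hδ δ' hδ'
  obtain ⟨hδF, τ₀, hτ₀F, hdim, ho1, hface⟩ := Finset.mem_filter.1 hδ
  refine Finset.mem_filter.2 ⟨hFan.faces_mem δ hδF δ' hδ', τ₀, hτ₀F, hdim, ho1, ?_⟩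
  exact isFaceOf_trans (hFan.rat τ₀ hτ₀F) hface hδ'

lemma divFaces_zero_mem (hFan : IsFan F)
    (hne : ∃ τ ∈ F, dimC τ = d - 1 ∧ o τ = 1) : ({0} : Set (V n)) ∈ divFaces F d o := by
  obtain ⟨τ₀, hτ₀F, hdim, ho1⟩ := hne
  have hface : IsFaceOf ({0} : Set (V n)) τ₀ :=
    zero_isFaceOf (hFan.rat τ₀ hτ₀F) (hFan.convex τ₀ hτ₀F)
  exact Finset.mem_filter.2
    ⟨hFan.faces_mem τ₀ hτ₀F _ hface, τ₀, hτ₀F, hdim, ho1, hface⟩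

end Div

/-- Let `Σ` be a simplicial tropical fan of pure dimension `d` and
`f` conewise integral linear with `ord_τ(f) ∈ {0,1}` everywhere and `ord_τ(f) = 1` for
at least one `τ`. Then `Σ̃ := TM_f(Σ)` is a simplicial rational fan in `ℝ^{n+1}` whose
rays are the rays `Γ(ρ)`, `ρ ∈ Σ₁`, with primitive generators `(e_ρ, f(e_ρ))`,
together with the special ray `ℝ₊·e` with primitive generator `e`; and the ring
homomorphism `x_ρ ↦ x_{Γ(ρ)}` descends to a well-defined surjective (graded) ring
homomorphism `A•(Σ) → A•(Σ̃)`. -/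
theorem tropical_modification_chow_surjective {n d : ℕ}
    (F : Finset (Set (V n))) (hF : IsTropicalFan F d) (hs : IsSimplicial F)
    (e : Set (V n) → Fin n → ℤ) (he : ∀ ρ ∈ raysF F, IsPrimitiveGen ρ (e ρ))
    (f : V n → ℝ) (hf : ConewiseLinear F f)
    (o : Set (V n) → ℤ)
    (ho : ∀ τ ∈ F, dimC τ = d - 1 → IsOrderAt F d f τ (o τ))
    (h01 : ∀ τ ∈ F, dimC τ = d - 1 → o τ = 0 ∨ o τ = 1)
    (hne : ∃ τ ∈ F, dimC τ = d - 1 ∧ o τ = 1)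
    (et : Set (V (n + 1)) → Fin (n + 1) → ℤ)
    (het : ∀ r ∈ raysF (TMfan F f (divFaces F d o)), IsPrimitiveGen r (et r)) :
    IsFan (TMfan F f (divFaces F d o)) ∧
    IsSimplicial (TMfan F f (divFaces F d o)) ∧
    (∀ ξ : Set (V (n + 1)), ξ ∈ raysF (TMfan F f (divFaces F d o)) ↔
      ((∃ ρ ∈ raysF F, ξ = graphMap f '' ρ) ∨ ξ = specialRay n)) ∧
    (∀ ρ ∈ raysF F, ∃ m : ℤ, (m : ℝ) = f (intVec (e ρ)) ∧
      IsPrimitiveGen (graphMap f '' ρ) (Fin.snoc (e ρ) m)) ∧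
    IsPrimitiveGen (specialRay n) (Fin.snoc (0 : Fin n → ℤ) 1) ∧
    ∃ ψ : ChowRing F e →+* ChowRing (TMfan F f (divFaces F d o)) et,
      Function.Surjective ψ ∧
      ∀ (ρ : RayT F) (r : RayT (TMfan F f (divFaces F d o))),
        r.1 = graphMap f '' ρ.1 →
        ψ (Ideal.Quotient.mk (chowIdeal F e) (X ρ))
          = Ideal.Quotient.mk (chowIdeal (TMfan F f (divFaces F d o)) et) (X r) := by
  have hFan : IsFan F := hF.1
  have hΔF : divFaces F d o ⊆ F := divFaces_subset
  have hΔface := divFaces_face_closed (o := o) (d := d) hFan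
  have hΔ0 : ({0} : Set (V n)) ∈ divFaces F d o := divFaces_zero_mem hFan hne
  refine ⟨tm_isFan hFan hf hΔF hΔface,
    tm_isSimplicial hFan hf hΔF hΔ0 hs,
    fun ξ => mem_raysF_TM_iff hFan hf hΔF hΔ0,
    ?_, primGen_special,
    chow_surjective hFan hf hΔF hΔ0 hΔface e he et het⟩
  intro ρ hρ
  obtain ⟨ℓ, hℓ⟩ := hf ρ (Finset.mem_filter.1 hρ).1
  refine ⟨pairZ ℓ (e ρ), ?_, primGen_graph hℓ (he ρ hρ)⟩
  rw [hℓ _ (he ρ hρ).2.1, pairR_intVec]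

end
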